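/- arXiv:2507.01221 — 4 statements merged into one kernel-verified Lean document; each statement's English description precedes it below -/
import Mathlib

section
/- Let λ = (λ_1,…,λ_n) ∈ ℤ^n with λ_1 ≥ λ_2 ≥ … ≥ λ_n, and let V be the complex vector space with basis the (finite) set of standard Gelfand–Tsetlin tableaux with top row l_{nj} = λ_j − j + 1 (j = 1,…,n), equipped with the operators E_{k,k+1}, E_{k+1,k}, E_{kk} given by the Gelfand–Tsetlin formulas (non-standard tableaux replaced by 0). Then V is a simple module: the only subspaces of V invariant under all the operators E_{k,k+1}, E_{k+1,k} (1 ≤ k ≤ n−1) and E_{kk} (1 ≤ k ≤ n) are 0 and V. -/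
namespace GT

/-- A Gelfand–Tsetlin tableau: an assignment of a complex number to each position `(i,j)`.
Only positions in the vertex set `Vtx n` are relevant. -/
abbrev Tableau := ℕ × ℕ → ℂ

/-- The vertex set `𝔙 = {(i,j) : 1 ≤ j ≤ i ≤ n}`. -/
def Vtx (n : ℕ) : Set (ℕ × ℕ) := {p | 1 ≤ p.2 ∧ p.2 ≤ p.1 ∧ p.1 ≤ n}

/-- `z ∈ ℤ_{≥0}` (as a complex number). -/
def IsNonnegInt (z : ℂ) : Prop := ∃ m : ℕ, z = (m : ℂ)

/-- `z ∈ ℤ_{>0}` (as a complex number). -/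
def IsPosInt (z : ℂ) : Prop := ∃ m : ℕ, z = (m : ℂ) + 1

/-- `z ∈ ℤ` (as a complex number). -/
def IsInt (z : ℂ) : Prop := ∃ m : ℤ, z = (m : ℂ)

/-- The arrow relation of the graph `G(M)` associated with a tableau `M`. -/
def graphOf (n : ℕ) (M : Tableau) : (ℕ × ℕ) → (ℕ × ℕ) → Prop := fun a b =>
  a ∈ Vtx n ∧ b ∈ Vtx n ∧
    ((a.1 = b.1 + 1 ∧ IsNonnegInt (M a - M b)) ∨
     (b.1 = a.1 + 1 ∧ IsPosInt (M a - M b)) ∨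
     (a.1 = n ∧ b.1 = n ∧ a.2 ≠ b.2 ∧ IsNonnegInt (M a - M b)))

/-- The arrow relation of `Ḡ`: an arrow `a → b` iff there is a directed path in `G`
from `a` to `b` with `|a.1 - b.1| = 1`, or `a, b` are distinct vertices in row `n`. -/
def bar (n : ℕ) (E : (ℕ × ℕ) → (ℕ × ℕ) → Prop) : (ℕ × ℕ) → (ℕ × ℕ) → Prop := fun a b =>
  (Relation.TransGen E a b ∧ (a.1 = b.1 + 1 ∨ b.1 = a.1 + 1)) ∨
  (a ∈ Vtx n ∧ b ∈ Vtx n ∧ a.1 = n ∧ b.1 = n ∧ a.2 ≠ b.2)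

/-- The graph difference `G ∖ H` (on arrow relations). -/
def gdiff (E F : (ℕ × ℕ) → (ℕ × ℕ) → Prop) : (ℕ × ℕ) → (ℕ × ℕ) → Prop :=
  fun a b => E a b ∧ ¬ F a b

/-- `E⁺_H`: the set of arrows of `H` pointing down (from row `k+1` to row `k`). -/
def Eplus (E : (ℕ × ℕ) → (ℕ × ℕ) → Prop) : Set ((ℕ × ℕ) × (ℕ × ℕ)) :=
  {p | E p.1 p.2 ∧ p.1.1 = p.2.1 + 1}

/-- `𝔙_H`: the set of vertices incident to some arrow of `H`. -/
def VtxOf (E : (ℕ × ℕ) → (ℕ × ℕ) → Prop) : Set (ℕ × ℕ) :=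
  {a | (∃ b, E a b) ∨ (∃ b, E b a)}

/-- `((k,i),(k,j))` is an adjoining pair of vertices in the graph with arrow relation `E`. -/
def Adjoining (n : ℕ) (E : (ℕ × ℕ) → (ℕ × ℕ) → Prop) (k i j : ℕ) : Prop :=
  1 ≤ i ∧ i < j ∧ j ≤ k ∧ k ≤ n - 1 ∧ Relation.TransGen E (k, i) (k, j) ∧
    ∀ t, i < t → t < j →
      ¬ Relation.TransGen E (k, i) (k, t) ∧ ¬ Relation.TransGen E (k, t) (k, j)

/-- The arrow relation `E` is a relation graph on `𝔙`. -/
def IsRelationGraph (n : ℕ) (E : (ℕ × ℕ) → (ℕ × ℕ) → Prop) : Prop :=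
  -- (i) arrows join vertices of 𝔙 in consecutive rows, or two distinct vertices in row n
  (∀ a b, E a b → a ∈ Vtx n ∧ b ∈ Vtx n ∧
      (a.1 = b.1 + 1 ∨ b.1 = a.1 + 1 ∨ (a.1 = n ∧ b.1 = n ∧ a.2 ≠ b.2))) ∧
  -- (ii) no directed path from (k,j) to (k,i) for 1 ≤ i < j ≤ k
  (∀ k i j : ℕ, 1 ≤ i → i < j → j ≤ k → ¬ Relation.TransGen E (k, j) (k, i)) ∧
  -- (iii) no oriented cycles
  (∀ a, ¬ Relation.TransGen E a a) ∧
  -- (iv) vertices in a row k < n in the same connected component are joined by a directed path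
  (∀ k i j : ℕ, k < n → (k, i) ∈ Vtx n → (k, j) ∈ Vtx n → i ≠ j →
      Relation.EqvGen E (k, i) (k, j) →
      Relation.TransGen E (k, i) (k, j) ∨ Relation.TransGen E (k, j) (k, i)) ∧
  -- (v) no crossing pair of down arrows
  (∀ k r s i j : ℕ, r < s → i < j → ¬ (E (k+1, r) (k, j) ∧ E (k+1, s) (k, i))) ∧
  -- (vi) condition on adjoining pairs
  (∀ k i j : ℕ, Adjoining n E k i j →
      (∃ p q, E (k, i) (k+1, p) ∧ E (k+1, p) (k, j) ∧
              E (k, i) (k-1, q) ∧ E (k-1, q) (k, j)) ∨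
      (∃ s t, s < t ∧ E (k, i) (k+1, s) ∧ E (k+1, t) (k, j)))

/-- The tableau `M` satisfies the graph with arrow relation `E`. -/
def Satisfies (n : ℕ) (M : Tableau) (E : (ℕ × ℕ) → (ℕ × ℕ) → Prop) : Prop :=
  ∀ i j r s : ℕ, E (i, j) (r, s) →
    ((i = r + 1 ∨ (i = n ∧ r = n ∧ j < s)) → IsNonnegInt (M (i, j) - M (r, s))) ∧
    (r = i + 1 → IsPosInt (M (i, j) - M (r, s)))

/-- The tableau `M` is a `G`-realization, for `G` the graph with arrow relation `E`. -/
def IsRealization (n : ℕ) (E : (ℕ × ℕ) → (ℕ × ℕ) → Prop) (M : Tableau) : Prop :=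
  Satisfies n M E ∧
  ∀ k i j : ℕ, k ≤ n - 1 → (k, i) ∈ Vtx n → (k, j) ∈ Vtx n → i ≠ j →
    IsInt (M (k, i) - M (k, j)) → Relation.EqvGen E (k, i) (k, j)

/-- `z ∈ ℤ₀`: an integral vector indexed by `𝔙` vanishing on row `n`. -/
def ZZ0 (n : ℕ) (z : ℕ × ℕ → ℤ) : Prop :=
  (∀ i, z (n, i) = 0) ∧ ∀ p, p ∉ Vtx n → z p = 0

/-- The tableau `T(M + z)`. -/
def addZ (M : Tableau) (z : ℕ × ℕ → ℤ) : Tableau := fun p => M p + (z p : ℂ)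

/-- The vector `c · δ^v ∈ ℤ₀`. -/
def sing (v : ℕ × ℕ) (c : ℤ) : ℕ × ℕ → ℤ := fun p => if p = v then c else 0

/-- `B_G(T(L))`: the set of all `G`-realizations of the form `T(L+z)` with `z ∈ ℤ₀`. -/
def BG (n : ℕ) (E : (ℕ × ℕ) → (ℕ × ℕ) → Prop) (L : Tableau) : Set Tableau :=
  {M | ∃ z : ℕ × ℕ → ℤ, ZZ0 n z ∧ M = addZ L z ∧ IsRealization n E M}

/-- The coefficient of `T(M + δ^{ki})` in `E_{k,k+1}(T(M))`. -/
noncomputable def raiseCoeff (M : Tableau) (k i : ℕ) : ℂ :=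
  -((∏ j ∈ Finset.Icc 1 (k+1), (M (k, i) - M (k+1, j))) /
    (∏ j ∈ (Finset.Icc 1 k).erase i, (M (k, i) - M (k, j))))

/-- The coefficient of `T(M - δ^{ki})` in `E_{k+1,k}(T(M))`. -/
noncomputable def lowerCoeff (M : Tableau) (k i : ℕ) : ℂ :=
  (∏ j ∈ Finset.Icc 1 (k-1), (M (k, i) - M (k-1, j))) /
    (∏ j ∈ (Finset.Icc 1 k).erase i, (M (k, i) - M (k, j)))

/-- The eigenvalue of `E_{kk}` on `T(M)`. -/
noncomputable def diagCoeff (M : Tableau) (k : ℕ) : ℂ :=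
  ((k : ℂ) - 1) + (∑ i ∈ Finset.Icc 1 k, M (k, i)) - (∑ i ∈ Finset.Icc 1 (k-1), M (k-1, i))

/-- The tableau `T(M + c·δ^{ki})`. -/
def shift (M : Tableau) (k i : ℕ) (c : ℤ) : Tableau :=
  fun p => M p + if p = (k, i) then (c : ℂ) else 0

/-- The basis vector of `M` in the space with basis `B`, or `0` if `M ∉ B`. -/
noncomputable def emb (B : Set Tableau) (M : Tableau) : (↥B →₀ ℂ) := by
  classical exact if h : M ∈ B then Finsupp.single (⟨M, h⟩ : ↥B) 1 else 0

/-- The Gelfand–Tsetlin operator `E_{k,k+1}` on the space with basis `B`. -/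
noncomputable def raiseOp (B : Set Tableau) (k : ℕ) : (↥B →₀ ℂ) →ₗ[ℂ] (↥B →₀ ℂ) :=
  Finsupp.lsum ℂ fun T => LinearMap.toSpanSingleton ℂ _
    (∑ i ∈ Finset.Icc 1 k, raiseCoeff (T : Tableau) k i • emb B (shift (T : Tableau) k i 1))

/-- The Gelfand–Tsetlin operator `E_{k+1,k}` on the space with basis `B`. -/
noncomputable def lowerOp (B : Set Tableau) (k : ℕ) : (↥B →₀ ℂ) →ₗ[ℂ] (↥B →₀ ℂ) :=
  Finsupp.lsum ℂ fun T => LinearMap.toSpanSingleton ℂ _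
    (∑ i ∈ Finset.Icc 1 k, lowerCoeff (T : Tableau) k i • emb B (shift (T : Tableau) k i (-1)))

/-- The Gelfand–Tsetlin operator `E_{kk}` on the space with basis `B`. -/
noncomputable def diagOp (B : Set Tableau) (k : ℕ) : (↥B →₀ ℂ) →ₗ[ℂ] (↥B →₀ ℂ) :=
  Finsupp.lsum ℂ fun T => LinearMap.toSpanSingleton ℂ _
    (diagCoeff (T : Tableau) k • Finsupp.single T (1 : ℂ))

/-- A subspace of the space with basis `B` is a submodule if it is invariant under all the
Gelfand–Tsetlin operators `E_{k,k+1}`, `E_{k+1,k}` (1 ≤ k ≤ n-1) and `E_{kk}` (1 ≤ k ≤ n). -/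
def IsSubmoduleGT (n : ℕ) (B : Set Tableau) (W : Submodule ℂ (↥B →₀ ℂ)) : Prop :=
  (∀ k, 1 ≤ k → k ≤ n - 1 → ∀ v ∈ W, raiseOp B k v ∈ W ∧ lowerOp B k v ∈ W) ∧
  (∀ k, 1 ≤ k → k ≤ n → ∀ v ∈ W, diagOp B k v ∈ W)

/-- `U · T(R)`: the smallest submodule containing the basis tableau `T`. -/
noncomputable def genSub (n : ℕ) (B : Set Tableau) (T : ↥B) : Submodule ℂ (↥B →₀ ℂ) :=
  sInf {W | IsSubmoduleGT n B W ∧ Finsupp.single T 1 ∈ W}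

/-- `T(R) ≼₍₁₎ T(Q)`: the tableau `Q` appears with nonzero coefficient in `g · T(R)` for one
of the Gelfand–Tsetlin operators `g`. -/
def Prec1 (n : ℕ) (B : Set Tableau) (R Q : ↥B) : Prop :=
  (∃ k, 1 ≤ k ∧ k ≤ n - 1 ∧
    ((raiseOp B k (Finsupp.single R 1)) Q ≠ 0 ∨ (lowerOp B k (Finsupp.single R 1)) Q ≠ 0)) ∨
  (∃ k, 1 ≤ k ∧ k ≤ n ∧ (diagOp B k (Finsupp.single R 1)) Q ≠ 0)

/-- A standard Gelfand–Tsetlin tableau (entries outside `𝔙` normalized to `0`). -/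
def IsStandard (n : ℕ) (M : Tableau) : Prop :=
  ∀ k i : ℕ, 2 ≤ k → k ≤ n → 1 ≤ i → i < k →
    IsNonnegInt (M (k, i) - M (k-1, i)) ∧ IsPosInt (M (k-1, i) - M (k, i+1))

/-- The set of standard tableaux with top row `l_{nj} = λ_j - j + 1`. -/
def StdB (n : ℕ) (lam : ℕ → ℤ) : Set Tableau :=
  {M | (∀ p, p ∉ Vtx n → M p = 0) ∧ IsStandard n M ∧
    ∀ j : ℕ, 1 ≤ j → j ≤ n → M (n, j) = (lam j : ℂ) - (j : ℂ) + 1}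

section Dev

variable {n : ℕ} {lam : ℕ → ℤ}

/-- The value of the maximal tableau in column `i`. -/
def topv (lam : ℕ → ℤ) (i : ℕ) : ℤ := lam i - i + 1

/-- The maximal standard tableau. -/
noncomputable def Tmax (n : ℕ) (lam : ℕ → ℤ) : Tableau := fun p =>
  if 1 ≤ p.2 ∧ p.2 ≤ p.1 ∧ p.1 ≤ n then ((topv lam p.2 : ℤ) : ℂ) else 0

/-- Integer entry of a tableau. -/
noncomputable def zent (M : Tableau) (p : ℕ × ℕ) : ℤ := ⌊(M p).re⌋

lemma zent_eq {M : Tableau} {p : ℕ × ℕ} {m : ℤ} (h : M p = (m : ℂ)) : zent M p = m := by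
  simp [zent, h]

lemma isNonnegInt_coe_sub {a b : ℤ} (h : b ≤ a) : IsNonnegInt ((a : ℂ) - (b : ℂ)) := by
  refine ⟨(a - b).toNat, ?_⟩
  have h2 : ((a - b).toNat : ℤ) = a - b := Int.toNat_of_nonneg (by omega)
  have : (((a - b).toNat : ℤ) : ℂ) = ((a - b : ℤ) : ℂ) := by rw [h2]
  push_cast at this
  rw [this]

lemma isPosInt_coe_sub {a b : ℤ} (h : b < a) : IsPosInt ((a : ℂ) - (b : ℂ)) := by
  refine ⟨(a - b - 1).toNat, ?_⟩
  have h2 : ((a - b - 1).toNat : ℤ) = a - b - 1 := Int.toNat_of_nonneg (by omega)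
  have : (((a - b - 1).toNat : ℤ) : ℂ) = ((a - b - 1 : ℤ) : ℂ) := by rw [h2]
  push_cast at this
  rw [this]; ring

lemma le_of_isNonnegInt {a b : ℤ} (h : IsNonnegInt ((a : ℂ) - (b : ℂ))) : b ≤ a := by
  obtain ⟨m, hm⟩ := h
  have h2 : a - b = (m : ℤ) := by
    have : ((a - b : ℤ) : ℂ) = (((m : ℕ) : ℤ) : ℂ) := by push_cast; exact hm
    exact_mod_cast this
  omega

lemma lt_of_isPosInt {a b : ℤ} (h : IsPosInt ((a : ℂ) - (b : ℂ))) : b < a := by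
  obtain ⟨m, hm⟩ := h
  have h2 : a - b = (m : ℤ) + 1 := by
    have : ((a - b : ℤ) : ℂ) = (((m : ℤ) + 1 : ℤ) : ℂ) := by push_cast; exact hm
    exact_mod_cast this
  omega

end Dev
section Dev2

variable {n : ℕ} {lam : ℕ → ℤ} {Q : Tableau}

lemma top_row (hQ : Q ∈ StdB n lam) {i : ℕ} (h1 : 1 ≤ i) (h2 : i ≤ n) :
    Q (n, i) = ((topv lam i : ℤ) : ℂ) := by
  have := hQ.2.2 i h1 h2
  rw [this]; push_cast [topv]; ring

lemma zn_top (hQ : Q ∈ StdB n lam) {i : ℕ} (h1 : 1 ≤ i) (h2 : i ≤ n) :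
    zent Q (n, i) = topv lam i := zent_eq (top_row hQ h1 h2)

lemma ent_int (hQ : Q ∈ StdB n lam) :
    ∀ d k i : ℕ, k + d = n → 1 ≤ i → i ≤ k → Q (k, i) = ((zent Q (k, i) : ℤ) : ℂ) := by
  intro d
  induction d with
  | zero =>
    intro k i hk h1 h2
    have hk' : k = n := by omega
    subst hk'
    rw [zn_top hQ h1 h2]; exact top_row hQ h1 h2
  | succ d ih =>
    intro k i hk h1 h2
    have hup : Q (k+1, i) = ((zent Q (k+1, i) : ℤ) : ℂ) := ih (k+1) i (by omega) h1 (by omega)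
    have hstd := (hQ.2.1 (k+1) i (by omega) (by omega) h1 (by omega)).1
    have hk1 : k + 1 - 1 = k := by omega
    rw [hk1] at hstd
    obtain ⟨m, hm⟩ := hstd
    have : Q (k, i) = ((zent Q (k+1, i) - (m : ℤ) : ℤ) : ℂ) := by
      rw [hup] at hm; push_cast; push_cast at hm; linear_combination -hm
    rw [zent_eq this]; exact this

lemma ent (hQ : Q ∈ StdB n lam) {k i : ℕ} (h1 : 1 ≤ i) (h2 : i ≤ k) (h3 : k ≤ n) :
    Q (k, i) = ((zent Q (k, i) : ℤ) : ℂ) :=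
  ent_int hQ (n - k) k i (by omega) h1 h2

lemma zcol (hQ : Q ∈ StdB n lam) {k i : ℕ} (h1 : 1 ≤ i) (h2 : i ≤ k) (h3 : k + 1 ≤ n) :
    zent Q (k, i) ≤ zent Q (k+1, i) := by
  have hstd := (hQ.2.1 (k+1) i (by omega) (by omega) h1 (by omega)).1
  have hk1 : k + 1 - 1 = k := by omega
  rw [hk1, ent hQ h1 h2 (by omega), ent hQ h1 (by omega) h3] at hstd
  exact le_of_isNonnegInt hstd

lemma zdiag (hQ : Q ∈ StdB n lam) {k i : ℕ} (h1 : 1 ≤ i) (h2 : i ≤ k) (h3 : k + 1 ≤ n) :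
    zent Q (k+1, i+1) < zent Q (k, i) := by
  have hstd := (hQ.2.1 (k+1) i (by omega) (by omega) h1 (by omega)).2
  have hk1 : k + 1 - 1 = k := by omega
  rw [hk1, ent hQ h1 h2 (by omega), ent hQ (by omega) (by omega) h3] at hstd
  exact lt_of_isPosInt hstd

lemma zrow_adj (hQ : Q ∈ StdB n lam) {k j : ℕ} (h1 : 1 ≤ j) (h2 : j + 1 ≤ k) (h3 : k ≤ n) :
    zent Q (k, j+1) < zent Q (k, j) := by
  obtain ⟨m, rfl⟩ : ∃ m, k = m + 1 := ⟨k - 1, by omega⟩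
  calc zent Q (m+1, j+1) < zent Q (m, j) := zdiag hQ h1 (by omega) (by omega)
    _ ≤ zent Q (m+1, j) := zcol hQ h1 (by omega) (by omega)

lemma zrow (hQ : Q ∈ StdB n lam) {k j j' : ℕ} (h1 : 1 ≤ j) (h2 : j < j') (h3 : j' ≤ k)
    (h4 : k ≤ n) : zent Q (k, j') < zent Q (k, j) := by
  obtain ⟨d, rfl⟩ : ∃ d, j' = j + 1 + d := ⟨j' - j - 1, by omega⟩
  clear h2
  induction d with
  | zero => exact zrow_adj hQ h1 (by omega) h4
  | succ d ih =>
    calc zent Q (k, j + 1 + (d+1)) < zent Q (k, j + 1 + d) := by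
          have := zrow_adj hQ (j := j + 1 + d) (k := k) (by omega) (by omega) h4
          convert this using 3 <;> omega
      _ < zent Q (k, j) := ih (by omega)

lemma zrow_le (hQ : Q ∈ StdB n lam) {k j j' : ℕ} (h1 : 1 ≤ j) (h2 : j ≤ j') (h3 : j' ≤ k)
    (h4 : k ≤ n) : zent Q (k, j') ≤ zent Q (k, j) := by
  rcases eq_or_lt_of_le h2 with h | h
  · subst h; exact le_rfl
  · exact le_of_lt (zrow hQ h1 h h3 h4)

lemma zcol_up (hQ : Q ∈ StdB n lam) :
    ∀ d k i : ℕ, 1 ≤ i → i ≤ k → k + d ≤ n → zent Q (k, i) ≤ zent Q (k + d, i) := by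
  intro d
  induction d with
  | zero => intro k i _ _ _; simp
  | succ d ih =>
    intro k i h1 h2 h3
    calc zent Q (k, i) ≤ zent Q (k+1, i) := zcol hQ h1 h2 (by omega)
      _ ≤ zent Q (k + 1 + d, i) := ih (k+1) i h1 (by omega) (by omega)
      _ = zent Q (k + (d+1), i) := by ring_nf

lemma z_le_top (hQ : Q ∈ StdB n lam) {k i : ℕ} (h1 : 1 ≤ i) (h2 : i ≤ k) (h3 : k ≤ n) :
    zent Q (k, i) ≤ topv lam i := by
  have := zcol_up hQ (n - k) k i h1 h2 (by omega)
  have hk : k + (n - k) = n := by omega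
  rw [hk, zn_top hQ h1 (by omega)] at this
  exact this

lemma Tmax_mem (hn : 2 ≤ n) (hlam : ∀ j : ℕ, 1 ≤ j → j < n → lam (j+1) ≤ lam j) :
    Tmax n lam ∈ StdB n lam := by
  refine ⟨?_, ?_, ?_⟩
  · intro p hp
    have : ¬ (1 ≤ p.2 ∧ p.2 ≤ p.1 ∧ p.1 ≤ n) := hp
    simp [Tmax, this]
  · intro k i hk2 hkn h1i hik
    have c1 : 1 ≤ i ∧ i ≤ k ∧ k ≤ n := ⟨h1i, by omega, hkn⟩
    have c2 : 1 ≤ i ∧ i ≤ k - 1 ∧ k - 1 ≤ n := ⟨h1i, by omega, by omega⟩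
    have c3 : 1 ≤ i + 1 ∧ i + 1 ≤ k ∧ k ≤ n := ⟨by omega, by omega, hkn⟩
    constructor
    · show IsNonnegInt (Tmax n lam (k, i) - Tmax n lam (k-1, i))
      simp only [Tmax, if_pos c1, if_pos c2]
      exact ⟨0, by push_cast; ring⟩
    · show IsPosInt (Tmax n lam (k-1, i) - Tmax n lam (k, i+1))
      simp only [Tmax, if_pos c2, if_pos c3]
      have : topv lam (i+1) < topv lam i := by
        have := hlam i h1i (by omega)
        simp only [topv]; push_cast; omega
      exact isPosInt_coe_sub this
  · intro j h1 h2
    have c : 1 ≤ j ∧ j ≤ n ∧ n ≤ n := ⟨h1, h2, le_rfl⟩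
    simp only [Tmax, if_pos c]
    push_cast [topv]; ring

end Dev2
section Dev3

variable {n : ℕ} {lam : ℕ → ℤ} {Q : Tableau}

lemma shift_apply (M : Tableau) (k i : ℕ) (c : ℤ) (p : ℕ × ℕ) :
    shift M k i c p = M p + if p = (k, i) then (c : ℂ) else 0 := rfl

lemma shift_apply_ne (M : Tableau) (k i : ℕ) (c : ℤ) {p : ℕ × ℕ} (h : p ≠ (k, i)) :
    shift M k i c p = M p := by simp [shift_apply, h]

lemma shift_apply_self (M : Tableau) (k i : ℕ) (c : ℤ) :
    shift M k i c (k, i) = M (k, i) + (c : ℂ) := by simp [shift_apply]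

lemma shift_shift_cancel (M : Tableau) (k i : ℕ) (c : ℤ) :
    shift (shift M k i c) k i (-c) = M := by
  funext p
  by_cases h : p = (k, i) <;> simp [shift_apply, h]

lemma shift_eq_iff {M P : Tableau} {k i : ℕ} {c : ℤ} :
    shift M k i c = P ↔ M = shift P k i (-c) := by
  constructor
  · rintro rfl; rw [shift_shift_cancel]
  · rintro rfl
    have := shift_shift_cancel P k i (-c)
    rwa [neg_neg] at this

/-- weight of a position -/
def wtp (n : ℕ) (p : ℕ × ℕ) : ℕ := 2 ^ (p.1 * n + (n - p.2))

/-- positions strictly below row n -/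
def PosF (n : ℕ) : Finset (ℕ × ℕ) :=
  (Finset.Icc 1 n ×ˢ Finset.Icc 1 n).filter fun p => p.2 ≤ p.1 ∧ p.1 ≤ n - 1

lemma mem_PosF {n : ℕ} {p : ℕ × ℕ} (hn : 2 ≤ n) :
    p ∈ PosF n ↔ 1 ≤ p.2 ∧ p.2 ≤ p.1 ∧ p.1 ≤ n - 1 := by
  simp only [PosF, Finset.mem_filter, Finset.mem_product, Finset.mem_Icc]
  omega

/-- deficit at a position -/
noncomputable def dz (lam : ℕ → ℤ) (Q : Tableau) (p : ℕ × ℕ) : ℕ :=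
  (topv lam p.2 - zent Q p).toNat

/-- total 2-adic weight -/
noncomputable def NN (n : ℕ) (lam : ℕ → ℤ) (Q : Tableau) : ℕ :=
  ∑ p ∈ PosF n, dz lam Q p * wtp n p

lemma wtp_lt {k i i' : ℕ} (hn : 2 ≤ n) (h1 : i < i') (h2 : i' ≤ n - 1) :
    wtp n (k, i') < wtp n (k, i) := by
  simp only [wtp]
  apply Nat.pow_lt_pow_right (by norm_num)
  omega

lemma NN_eq_zero (hn : 2 ≤ n) (hQ : Q ∈ StdB n lam) (h : NN n lam Q = 0) : Q = Tmax n lam := by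
  have hz : ∀ p ∈ PosF n, dz lam Q p * wtp n p = 0 :=
    (Finset.sum_eq_zero_iff).1 h
  funext p
  by_cases hv : 1 ≤ p.2 ∧ p.2 ≤ p.1 ∧ p.1 ≤ n
  · by_cases hr : p.1 = n
    · have : Q (p.1, p.2) = ((topv lam p.2 : ℤ) : ℂ) := by
        rw [hr]; exact top_row hQ hv.1 (by omega)
      have hp : p = (p.1, p.2) := rfl
      rw [hp, this, Tmax, if_pos hv]
    · have hmem : p ∈ PosF n := (mem_PosF hn).2 ⟨hv.1, hv.2.1, by omega⟩
      have hdz : dz lam Q p = 0 := by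
        have := hz p hmem
        have hw : wtp n p ≠ 0 := by simp only [wtp]; positivity
        exact (Nat.mul_eq_zero.1 this).resolve_right hw
      have hle : zent Q p ≤ topv lam p.2 := by
        have hp : p = (p.1, p.2) := rfl
        rw [hp]; exact z_le_top hQ hv.1 hv.2.1 hv.2.2
      have hzz : zent Q p = topv lam p.2 := by
        simp only [dz, Int.toNat_eq_zero] at hdz
        omega
      have hp : p = (p.1, p.2) := rfl
      rw [hp] at hzz ⊢
      rw [ent hQ hv.1 hv.2.1 hv.2.2, hzz, Tmax, if_pos hv]
  · rw [hQ.1 p hv, Tmax, if_neg hv]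

lemma NN_shift (hn : 2 ≤ n) (hQ : Q ∈ StdB n lam) {k i : ℕ}
    (hP : shift Q k i 1 ∈ StdB n lam) (h1 : 1 ≤ i) (h2 : i ≤ k) (h3 : k ≤ n - 1) :
    NN n lam (shift Q k i 1) + wtp n (k, i) = NN n lam Q := by
  set P := shift Q k i 1 with hPdef
  have hmem : (k, i) ∈ PosF n := (mem_PosF hn).2 ⟨h1, h2, h3⟩
  have key : ∀ p ∈ PosF n,
      dz lam P p * wtp n p + (if p = (k, i) then wtp n (k, i) else 0) = dz lam Q p * wtp n p := by
    intro p hp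
    by_cases hpk : p = (k, i)
    · subst hpk
      have hzP : zent P (k, i) = zent Q (k, i) + 1 := by
        apply zent_eq
        rw [hPdef, shift_apply_self, ent hQ h1 h2 (by omega)]
        push_cast; ring
      have htop : zent Q (k, i) + 1 ≤ topv lam i := by
        have := z_le_top (k := k) (i := i) hP h1 h2 (by omega)
        rwa [hzP] at this
      have hdz : dz lam P (k, i) + 1 = dz lam Q (k, i) := by
        simp only [dz, hzP]
        omega
      simp only [if_pos rfl]
      calc dz lam P (k,i) * wtp n (k,i) + wtp n (k,i) = (dz lam P (k,i) + 1) * wtp n (k,i) := by ring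
        _ = dz lam Q (k,i) * wtp n (k,i) := by rw [hdz]
    · have : P p = Q p := shift_apply_ne Q k i 1 hpk
      simp [dz, zent, this, hpk]
  calc NN n lam P + wtp n (k, i)
      = ∑ p ∈ PosF n, dz lam P p * wtp n p
        + ∑ p ∈ PosF n, (if p = (k, i) then wtp n (k, i) else 0) := by
        rw [Finset.sum_ite_eq' (PosF n) (k, i), if_pos hmem]; rfl
    _ = ∑ p ∈ PosF n, (dz lam P p * wtp n p + (if p = (k, i) then wtp n (k, i) else 0)) := by
        rw [Finset.sum_add_distrib]
    _ = ∑ p ∈ PosF n, dz lam Q p * wtp n p := Finset.sum_congr rfl key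
    _ = NN n lam Q := rfl

lemma NN_move (hn : 2 ≤ n) (hQ : Q ∈ StdB n lam) {k i i' : ℕ}
    (hT : shift (shift Q k i 1) k i' (-1) ∈ StdB n lam)
    (h1 : 1 ≤ i) (h2 : i < i') (h3 : i' ≤ k) (h4 : k ≤ n - 1) :
    NN n lam (shift (shift Q k i 1) k i' (-1)) + wtp n (k, i) = NN n lam Q + wtp n (k, i') := by
  set T := shift (shift Q k i 1) k i' (-1) with hTdef
  have hii : (⟨k, i⟩ : ℕ × ℕ) ≠ (k, i') := by simp; omega
  have hmemi : (k, i) ∈ PosF n := (mem_PosF hn).2 ⟨h1, by omega, h4⟩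
  have hmemi' : (k, i') ∈ PosF n := (mem_PosF hn).2 ⟨by omega, h3, h4⟩
  have hTi : T (k, i) = Q (k, i) + 1 := by
    rw [hTdef, shift_apply_ne _ _ _ _ hii, shift_apply_self]; norm_num
  have hTi' : T (k, i') = Q (k, i') - 1 := by
    rw [hTdef, shift_apply_self, shift_apply_ne _ _ _ _ (by simp; omega : (⟨k,i'⟩ : ℕ × ℕ) ≠ (k,i))]
    push_cast; ring
  have hzTi : zent T (k, i) = zent Q (k, i) + 1 := by
    apply zent_eq; rw [hTi, ent hQ h1 (by omega) (by omega)]; push_cast; ring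
  have hzTi' : zent T (k, i') = zent Q (k, i') - 1 := by
    apply zent_eq; rw [hTi', ent hQ (by omega) h3 (by omega)]; push_cast; ring
  have htopi : zent Q (k, i) + 1 ≤ topv lam i := by
    have := z_le_top (k := k) (i := i) hT h1 (by omega) (by omega)
    rwa [hzTi] at this
  have htopi' : zent Q (k, i') ≤ topv lam i' := z_le_top (k := k) (i := i') hQ (by omega) h3 (by omega)
  have key : ∀ p ∈ PosF n,
      dz lam T p * wtp n p + (if p = (k, i) then wtp n (k, i) else 0)
      = dz lam Q p * wtp n p + (if p = (k, i') then wtp n (k, i') else 0) := by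
    intro p hp
    by_cases hpk : p = (k, i)
    · subst hpk
      have hdz : dz lam T (k, i) + 1 = dz lam Q (k, i) := by simp only [dz, hzTi]; omega
      rw [if_pos rfl, if_neg hii]
      calc dz lam T (k,i) * wtp n (k,i) + wtp n (k,i) = (dz lam T (k,i) + 1) * wtp n (k,i) := by ring
        _ = dz lam Q (k,i) * wtp n (k,i) + 0 := by rw [hdz]; ring
    · by_cases hpk' : p = (k, i')
      · subst hpk'
        have hdz : dz lam T (k, i') = dz lam Q (k, i') + 1 := by simp only [dz, hzTi']; omega
        rw [if_neg hpk, if_pos rfl, hdz]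
        ring
      · have : T p = Q p := by
          rw [hTdef, shift_apply_ne _ _ _ _ hpk', shift_apply_ne _ _ _ _ hpk]
        simp [dz, zent, this, hpk, hpk']
  calc NN n lam T + wtp n (k, i)
      = ∑ p ∈ PosF n, (dz lam T p * wtp n p + (if p = (k, i) then wtp n (k, i) else 0)) := by
        rw [Finset.sum_add_distrib, Finset.sum_ite_eq' (PosF n) (k, i), if_pos hmemi]; rfl
    _ = ∑ p ∈ PosF n, (dz lam Q p * wtp n p + (if p = (k, i') then wtp n (k, i') else 0)) :=
        Finset.sum_congr rfl key
    _ = NN n lam Q + wtp n (k, i') := by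
        rw [Finset.sum_add_distrib, Finset.sum_ite_eq' (PosF n) (k, i'), if_pos hmemi']; rfl

end Dev3
section Dev4

variable {n : ℕ} {lam : ℕ → ℤ} {Q : Tableau}

lemma int_ne_of_lt {a b : ℤ} (h : a < b) : ((a : ℂ)) - (b : ℂ) ≠ 0 := by
  rw [sub_ne_zero]
  exact_mod_cast ne_of_lt h

lemma int_ne_of_gt {a b : ℤ} (h : b < a) : ((a : ℂ)) - (b : ℂ) ≠ 0 := by
  rw [sub_ne_zero]
  exact_mod_cast ne_of_gt h

lemma gap_exists (hn : 2 ≤ n) (hQ : Q ∈ StdB n lam) (hne : Q ≠ Tmax n lam) :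
    ∃ k i : ℕ, 1 ≤ i ∧ i ≤ k ∧ k ≤ n - 1 ∧ zent Q (k, i) + 1 ≤ zent Q (k+1, i) := by
  by_contra hcon
  push_neg at hcon
  have flat : ∀ k i, 1 ≤ i → i ≤ k → k ≤ n - 1 → zent Q (k, i) = zent Q (k+1, i) := by
    intro k i h1 h2 h3
    have hle := zcol hQ h1 h2 (by omega)
    have := hcon k i h1 h2 h3
    omega
  have all_top : ∀ d k i, 1 ≤ i → i ≤ k → k + d = n → zent Q (k, i) = topv lam i := by
    intro d
    induction d with
    | zero =>
      intro k i h1 h2 h3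
      have hk : k = n := by omega
      subst hk; exact zn_top hQ h1 (by omega)
    | succ d ih =>
      intro k i h1 h2 h3
      rw [flat k i h1 h2 (by omega)]
      exact ih (k+1) i h1 (by omega) (by omega)
  apply hne
  funext p
  by_cases hv : 1 ≤ p.2 ∧ p.2 ≤ p.1 ∧ p.1 ≤ n
  · have hp : p = (p.1, p.2) := rfl
    have htop := all_top (n - p.1) p.1 p.2 hv.1 hv.2.1 (by omega)
    rw [hp, ent hQ hv.1 hv.2.1 hv.2.2, htop]
    show _ = Tmax n lam p
    rw [Tmax, if_pos hv]
  · rw [hQ.1 p hv]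
    show _ = Tmax n lam p
    rw [Tmax, if_neg hv]
    
lemma canon (hn : 2 ≤ n) (hQ : Q ∈ StdB n lam) (hne : Q ≠ Tmax n lam) :
    ∃ k i : ℕ, 1 ≤ i ∧ i ≤ k ∧ k ≤ n - 1 ∧
      shift Q k i 1 ∈ StdB n lam ∧
      raiseCoeff Q k i ≠ 0 ∧
      lowerCoeff (shift Q k i 1) k i ≠ 0 ∧
      (∀ i', 1 ≤ i' → i' < i → shift (shift Q k i 1) k i' (-1) ∉ StdB n lam) := by
  classical
  have hex : ∃ k : ℕ, ∃ i : ℕ, 1 ≤ i ∧ i ≤ k ∧ k ≤ n - 1 ∧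
      zent Q (k, i) + 1 ≤ zent Q (k+1, i) := by
    obtain ⟨k, i, h⟩ := gap_exists hn hQ hne
    exact ⟨k, i, h⟩
  obtain ⟨i, h1i, hik, hkn, hgap⟩ := Nat.find_spec hex
  set k := Nat.find hex with hkdef
  have hflat : ∀ m' j, m' + 1 = k → 1 ≤ j → j ≤ m' → zent Q (m', j) = zent Q (m'+1, j) := by
    intro m' j hm' h1 h2
    have hmin := Nat.find_min hex (show m' < k by omega)
    push_neg at hmin
    have hle := zcol hQ h1 h2 (show m' + 1 ≤ n by omega)
    have := hmin j h1 h2 (by omega)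
    omega
  set P := shift Q k i 1 with hPdef
  -- integer entries of P
  have entP : ∀ m j : ℕ, 1 ≤ j → j ≤ m → m ≤ n →
      P (m, j) = ((zent Q (m, j) + (if ((m : ℕ), j) = ((k : ℕ), i) then 1 else 0) : ℤ) : ℂ) := by
    intro m j hj hjm hmn
    by_cases h : ((m : ℕ), j) = ((k : ℕ), i)
    · rw [if_pos h, hPdef]
      rw [Prod.mk.injEq] at h
      obtain ⟨rfl, rfl⟩ := h
      rw [shift_apply_self, ent hQ hj hjm hmn]
      push_cast; ring
    · rw [if_neg h, hPdef, shift_apply_ne _ _ _ _ h, ent hQ hj hjm hmn]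
      push_cast; ring
  -- P is standard
  have hPmem : P ∈ StdB n lam := by
    refine ⟨?_, ?_, ?_⟩
    · intro p hp
      have hne' : p ≠ ((k : ℕ), i) := by
        rintro rfl
        exact hp ⟨h1i, hik, by omega⟩
      rw [hPdef, shift_apply_ne _ _ _ _ hne']
      exact hQ.1 p hp
    · intro k' i' hk2 hkn' h1i' hi'k'
      obtain ⟨m, rfl⟩ : ∃ m, k' = m + 1 := ⟨k' - 1, by omega⟩
      have hm1 : m + 1 - 1 = m := by omega
      rw [hm1]
      constructor
      · show IsNonnegInt (P (m+1, i') - P (m, i'))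
        rw [entP (m+1) i' h1i' (by omega) (by omega), entP m i' h1i' (by omega) (by omega)]
        apply isNonnegInt_coe_sub
        have f1 : zent Q (m, i') ≤ zent Q (m+1, i') := zcol hQ h1i' (by omega) (by omega)
        by_cases hB : ((m : ℕ), i') = ((k : ℕ), i)
        · rw [Prod.mk.injEq] at hB
          obtain ⟨hB1, hB2⟩ := hB
          have hC : ¬ (((m+1 : ℕ), i') = ((k : ℕ), i)) := by
            rw [Prod.mk.injEq]; omega
          rw [if_pos (by rw [Prod.mk.injEq]; exact ⟨hB1, hB2⟩), if_neg hC]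
          subst hB2
          have : zent Q (m, i') + 1 ≤ zent Q (m+1, i') := by rw [hB1]; exact hgap
          linarith
        · rw [if_neg hB]
          split_ifs with hC
          · linarith
          · linarith
      · show IsPosInt (P (m, i') - P (m+1, i'+1))
        rw [entP m i' h1i' (by omega) (by omega), entP (m+1) (i'+1) (by omega) (by omega) (by omega)]
        apply isPosInt_coe_sub
        have f2 : zent Q (m+1, i'+1) < zent Q (m, i') := zdiag hQ h1i' (by omega) (by omega)
        by_cases hB : ((m : ℕ), i') = ((k : ℕ), i)
        · have hC : ¬ (((m+1 : ℕ), i'+1) = ((k : ℕ), i)) := by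
            rw [Prod.mk.injEq] at hB ⊢; omega
          rw [if_pos hB, if_neg hC]
          linarith
        · by_cases hC : ((m+1 : ℕ), i'+1) = ((k : ℕ), i)
          · rw [Prod.mk.injEq] at hC
            obtain ⟨hC1, hC2⟩ := hC
            rw [if_neg hB, if_pos (by rw [Prod.mk.injEq]; exact ⟨hC1, hC2⟩)]
            -- k = m+1, i = i'+1
            have e1 : zent Q (m, i') = zent Q (m+1, i') := hflat m i' (by omega) h1i' (by omega)
            have e2 : zent Q (m+1+1, i'+1) < zent Q (m+1, i') :=
              zdiag hQ (k := m+1) (i := i') h1i' (by omega) (by omega)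
            have e3 : zent Q (m+1, i'+1) + 1 ≤ zent Q (m+1+1, i'+1) := by
              rw [← hC1, ← hC2] at hgap; exact hgap
            linarith
          · rw [if_neg hB, if_neg hC]
            linarith
    · intro j h1 h2
      have hne' : ((n : ℕ), j) ≠ ((k : ℕ), i) := by
        intro hEq; rw [Prod.mk.injEq] at hEq; omega
      rw [hPdef, shift_apply_ne _ _ _ _ hne']
      exact hQ.2.2 j h1 h2
  -- raiseCoeff nonzero
  have hraise : raiseCoeff Q k i ≠ 0 := by
    rw [raiseCoeff, neg_ne_zero]
    apply div_ne_zero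
    · rw [Finset.prod_ne_zero_iff]
      intro j hj
      rw [Finset.mem_Icc] at hj
      rw [ent hQ h1i hik (by omega), ent hQ hj.1 hj.2 (by omega)]
      rcases lt_trichotomy j i with h | h | h
      · apply int_ne_of_lt
        calc zent Q (k, i) < zent Q (k, j) := zrow hQ hj.1 h (by omega) (by omega)
          _ ≤ zent Q (k+1, j) := zcol hQ hj.1 (by omega) (by omega)
      · subst h
        apply int_ne_of_lt; omega
      · apply int_ne_of_gt
        calc zent Q (k+1, j) ≤ zent Q (k+1, i+1) := zrow_le hQ (by omega) h hj.2 (by omega)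
          _ < zent Q (k, i) := zdiag hQ h1i hik (by omega)
    · rw [Finset.prod_ne_zero_iff]
      intro j hj
      rw [Finset.mem_erase, Finset.mem_Icc] at hj
      rw [ent hQ h1i hik (by omega), ent hQ hj.2.1 hj.2.2 (by omega)]
      rcases lt_trichotomy j i with h | h | h
      · exact int_ne_of_lt (zrow hQ hj.2.1 h hik (by omega))
      · exact absurd h hj.1
      · exact int_ne_of_gt (zrow hQ h1i h hj.2.2 (by omega))
  -- key inequality for j < i : zent Q (k, j) ≥ zent Q (k,i) + 2
  have hjlt : ∀ j, 1 ≤ j → j < i → zent Q (k, i) + 2 ≤ zent Q (k, j) := by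
    intro j h1 h2
    obtain ⟨t, rfl⟩ : ∃ t, i = t + 1 := ⟨i - 1, by omega⟩
    have g1 : zent Q (k, t) ≤ zent Q (k, j) := zrow_le hQ h1 (by omega) (by omega) (by omega)
    have g2 : zent Q (k+1, t+1) < zent Q (k, t) := zdiag hQ (by omega) (by omega) (by omega)
    linarith [hgap]
  -- lowerCoeff of P nonzero
  have hlower : lowerCoeff P k i ≠ 0 := by
    rw [lowerCoeff]
    apply div_ne_zero
    · rw [Finset.prod_ne_zero_iff]
      intro j hj
      rw [Finset.mem_Icc] at hj
      have hk2 : 2 ≤ k := by omega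
      have hPki : P (k, i) = ((zent Q (k, i) + 1 : ℤ) : ℂ) := by
        rw [entP k i h1i hik (by omega), if_pos rfl]
      have hPkj : P (k-1, j) = ((zent Q (k, j) : ℤ) : ℂ) := by
        obtain ⟨m, hm⟩ : ∃ m, k = m + 1 := ⟨k - 1, by omega⟩
        have hm1 : k - 1 = m := by omega
        have hjm : j ≤ m := by omega
        have hmn : m ≤ n := by omega
        have hne2 : ((m : ℕ), j) ≠ ((k : ℕ), i) := by
          intro hEq; rw [Prod.mk.injEq] at hEq; omega
        have hfl := hflat m j (by omega) hj.1 hjm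
        rw [hm1, entP m j hj.1 hjm hmn, if_neg hne2, hfl, ← hm]
        push_cast; ring
      rw [hPki, hPkj]
      rcases lt_trichotomy j i with h | h | h
      · exact int_ne_of_lt (by have := hjlt j hj.1 h; omega)
      · subst h; exact int_ne_of_gt (by omega)
      · exact int_ne_of_gt (by have := zrow (k := k) hQ h1i h (by omega) (by omega); omega)
    · rw [Finset.prod_ne_zero_iff]
      intro j hj
      rw [Finset.mem_erase, Finset.mem_Icc] at hj
      have hPki : P (k, i) = ((zent Q (k, i) + 1 : ℤ) : ℂ) := by
        rw [entP k i h1i hik (by omega), if_pos rfl]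
      have hPkj : P (k, j) = ((zent Q (k, j) : ℤ) : ℂ) := by
        rw [entP k j hj.2.1 hj.2.2 (by omega),
          if_neg (by intro hEq; rw [Prod.mk.injEq] at hEq; omega)]
        push_cast; ring
      rw [hPki, hPkj]
      rcases lt_trichotomy j i with h | h | h
      · exact int_ne_of_lt (by have := hjlt j hj.2.1 h; omega)
      · exact absurd h hj.1
      · exact int_ne_of_gt (by have := zrow (k := k) hQ h1i h hj.2.2 (by omega); omega)
  -- non-standardness for i' < i
  have hL4 : ∀ i', 1 ≤ i' → i' < i → shift P k i' (-1) ∉ StdB n lam := by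
    intro i' h1 h2 hT'
    set T := shift P k i' (-1) with hTdef
    have hk2 : 2 ≤ k := by omega
    obtain ⟨m, hm⟩ : ∃ m, k = m + 1 := ⟨k - 1, by omega⟩
    have hstd := (hT'.2.1 k i' hk2 (by omega) h1 (by omega)).1
    have hTl : T (k, i') = ((zent Q (k, i') - 1 : ℤ) : ℂ) := by
      rw [hTdef, shift_apply_self, hPdef,
        shift_apply_ne _ _ _ _
          (by intro hEq; rw [Prod.mk.injEq] at hEq; omega : ((k:ℕ), i') ≠ ((k:ℕ), i)),
        ent hQ h1 (by omega) (by omega)]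
      push_cast; ring
    have hTu : T (k-1, i') = ((zent Q (k, i') : ℤ) : ℂ) := by
      have hm1 : k - 1 = m := by omega
      rw [hTdef, hm1,
        shift_apply_ne _ _ _ _
          (by intro hEq; rw [Prod.mk.injEq] at hEq; omega : ((m:ℕ), i') ≠ ((k:ℕ), i')),
        hPdef, shift_apply_ne _ _ _ _
          (by intro hEq; rw [Prod.mk.injEq] at hEq; omega : ((m:ℕ), i') ≠ ((k:ℕ), i))]
      rw [ent hQ h1 (by omega) (by omega), hflat m i' (by omega) h1 (by omega), ← hm]
    rw [hTl, hTu] at hstd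
    have := le_of_isNonnegInt hstd
    omega
  exact ⟨k, i, h1i, hik, hkn, hPmem, hraise, hlower, hL4⟩

end Dev4
section Dev5
open scoped Classical

variable {B : Set Tableau}

lemma emb_of_mem {M : Tableau} (h : M ∈ B) : emb B M = Finsupp.single (⟨M, h⟩ : ↥B) 1 := by
  rw [emb, dif_pos h]

lemma emb_of_notMem {M : Tableau} (h : M ∉ B) : emb B M = 0 := by
  rw [emb, dif_neg h]

lemma emb_apply (B : Set Tableau) (M : Tableau) (Q : ↥B) :
    emb B M Q = if M = ↑Q then 1 else 0 := by
  classical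
  by_cases h : M ∈ B
  · rw [emb_of_mem h, Finsupp.single_apply]
    by_cases he : M = ↑Q
    · rw [if_pos he, if_pos (Subtype.ext he)]
    · rw [if_neg he, if_neg (fun hc => he (by rw [← hc]))]
  · have hne : M ≠ ↑Q := fun hc => h (by rw [hc]; exact Q.2)
    rw [emb_of_notMem h, if_neg hne]
    rfl

lemma diag_apply (B : Set Tableau) (k : ℕ) (v : ↥B →₀ ℂ) (Q : ↥B) :
    diagOp B k v Q = diagCoeff (↑Q) k * v Q := by
  classical
  rw [diagOp, Finsupp.lsum_apply, Finsupp.sum_apply, Finsupp.sum]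
  have step : ∀ T ∈ v.support,
      (LinearMap.toSpanSingleton ℂ (↥B →₀ ℂ)
        (diagCoeff (T : Tableau) k • Finsupp.single T (1:ℂ)) (v T)) Q
      = if T = Q then diagCoeff (↑Q) k * v T else 0 := by
    intro T hT
    rw [LinearMap.toSpanSingleton_apply]
    simp only [Finsupp.smul_apply, Finsupp.single_apply, smul_eq_mul]
    by_cases h : T = Q
    · subst h; simp [mul_comm]
    · simp [h]
  rw [Finset.sum_congr rfl step, Finset.sum_ite_eq' v.support Q]
  by_cases h : Q ∈ v.support
  · rw [if_pos h]
  · rw [if_neg h, Finsupp.notMem_support_iff.1 h, mul_zero]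

lemma raise_apply (B : Set Tableau) (k : ℕ) (v : ↥B →₀ ℂ) (Q : ↥B) :
    raiseOp B k v Q = ∑ T ∈ v.support,
      v T * ∑ i' ∈ Finset.Icc 1 k,
        raiseCoeff (↑T) k i' * (if shift (↑T) k i' 1 = ↑Q then 1 else 0) := by
  classical
  rw [raiseOp, Finsupp.lsum_apply, Finsupp.sum_apply, Finsupp.sum]
  apply Finset.sum_congr rfl
  intro T hT
  rw [LinearMap.toSpanSingleton_apply, Finsupp.smul_apply, smul_eq_mul]
  congr 1
  rw [Finset.sum_apply']
  apply Finset.sum_congr rfl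
  intro i' _
  rw [Finsupp.smul_apply, smul_eq_mul, emb_apply]

lemma lower_single (B : Set Tableau) (k : ℕ) (P : ↥B) :
    lowerOp B k (Finsupp.single P 1) =
      ∑ i' ∈ Finset.Icc 1 k, lowerCoeff (↑P) k i' • emb B (shift (↑P) k i' (-1)) := by
  rw [lowerOp, Finsupp.lsum_single, LinearMap.toSpanSingleton_apply, one_smul]

end Dev5
section Dev6
open scoped Classical

variable {n : ℕ} {lam : ℕ → ℤ} {Q S : Tableau}

noncomputable def rsum (Q : Tableau) (k : ℕ) : ℤ := ∑ i ∈ Finset.Icc 1 k, zent Q (k, i)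

lemma row_sum_cast (hQ : Q ∈ StdB n lam) {k : ℕ} (hk : k ≤ n) :
    ∑ i ∈ Finset.Icc 1 k, Q (k, i) = ((rsum Q k : ℤ) : ℂ) := by
  rw [rsum]
  push_cast
  apply Finset.sum_congr rfl
  intro i hi
  rw [Finset.mem_Icc] at hi
  rw [ent hQ hi.1 hi.2 hk]

lemma diagCoeff_cast (hQ : Q ∈ StdB n lam) {k : ℕ} (h1 : 1 ≤ k) (hk : k ≤ n) :
    diagCoeff Q k = ((k : ℂ) - 1) + ((rsum Q k : ℤ) : ℂ) - ((rsum Q (k-1) : ℤ) : ℂ) := by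
  rw [diagCoeff, row_sum_cast hQ hk, row_sum_cast hQ (show k - 1 ≤ n by omega)]

lemma zent_Tmax {k i : ℕ} (h1 : 1 ≤ i) (h2 : i ≤ k) (h3 : k ≤ n) :
    zent (Tmax n lam) (k, i) = topv lam i := by
  apply zent_eq
  show Tmax n lam (k, i) = _
  rw [Tmax, if_pos (⟨h1, h2, h3⟩ : 1 ≤ (((k:ℕ), i) : ℕ × ℕ).2 ∧ _ ∧ _)]

lemma diag_sep (hn : 2 ≤ n) (hlam : ∀ j : ℕ, 1 ≤ j → j < n → lam (j+1) ≤ lam j)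
    (hS : S ∈ StdB n lam) (hne : S ≠ Tmax n lam) :
    ∃ k, 1 ≤ k ∧ k ≤ n ∧ diagCoeff S k ≠ diagCoeff (Tmax n lam) k := by
  by_contra hcon
  push_neg at hcon
  have hTm : Tmax n lam ∈ StdB n lam := Tmax_mem hn hlam
  have hrs : ∀ k, k ≤ n → rsum S k = rsum (Tmax n lam) k := by
    intro k
    induction k with
    | zero => intro _; rw [rsum, rsum]; simp
    | succ k ih =>
      intro hk
      have hd := hcon (k+1) (by omega) hk
      rw [diagCoeff_cast hS (by omega) hk, diagCoeff_cast hTm (by omega) hk] at hd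
      have hk1 : k + 1 - 1 = k := by omega
      rw [hk1] at hd
      rw [ih (by omega)] at hd
      have : ((rsum S (k+1) : ℤ) : ℂ) = ((rsum (Tmax n lam) (k+1) : ℤ) : ℂ) := by
        linear_combination hd
      exact_mod_cast this
  apply hne
  have hall : ∀ k i, 1 ≤ i → i ≤ k → k ≤ n → zent S (k, i) = topv lam i := by
    intro k i h1 h2 h3
    have hsum : ∑ i ∈ Finset.Icc 1 k, (topv lam i - zent S (k, i)) = 0 := by
      rw [Finset.sum_sub_distrib]
      have h2' : rsum S k = rsum (Tmax n lam) k := hrs k h3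
      rw [rsum, rsum] at h2'
      rw [h2']
      have : ∀ j ∈ Finset.Icc 1 k, zent (Tmax n lam) (k, j) = topv lam j := by
        intro j hj
        rw [Finset.mem_Icc] at hj
        exact zent_Tmax hj.1 hj.2 h3
      rw [Finset.sum_congr rfl this]
      ring
    have hnn : ∀ j ∈ Finset.Icc 1 k, 0 ≤ topv lam j - zent S (k, j) := by
      intro j hj
      rw [Finset.mem_Icc] at hj
      have := z_le_top hS hj.1 hj.2 h3
      omega
    have := (Finset.sum_eq_zero_iff_of_nonneg hnn).1 hsum i (Finset.mem_Icc.2 ⟨h1, h2⟩)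
    omega
  funext p
  by_cases hv : 1 ≤ p.2 ∧ p.2 ≤ p.1 ∧ p.1 ≤ n
  · have hp : p = (p.1, p.2) := rfl
    rw [hp, ent hS hv.1 hv.2.1 hv.2.2, hall p.1 p.2 hv.1 hv.2.1 hv.2.2]
    show _ = Tmax n lam p
    rw [Tmax, if_pos hv]
  · rw [hS.1 p hv]
    show _ = Tmax n lam p
    rw [Tmax, if_neg hv]

end Dev6
section Dev7
open scoped Classical

variable {n : ℕ} {lam : ℕ → ℤ}

lemma extract (hn : 2 ≤ n) (hlam : ∀ j : ℕ, 1 ≤ j → j < n → lam (j+1) ≤ lam j)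
    (W : Submodule ℂ (↥(StdB n lam) →₀ ℂ))
    (hD : ∀ k, 1 ≤ k → k ≤ n → ∀ v ∈ W, diagOp (StdB n lam) k v ∈ W)
    (Tm : ↥(StdB n lam)) (hTme : (Tm : Tableau) = Tmax n lam) :
    ∀ c : ℕ, ∀ v ∈ W, Tm ∈ v.support → v.support.card ≤ c →
      Finsupp.single Tm (1 : ℂ) ∈ W := by
  intro c
  induction c with
  | zero =>
    intro v hv hT hc
    exact absurd (Finset.card_pos.2 ⟨Tm, hT⟩) (by omega)
  | succ c ih =>
    intro v hvW hT hc
    by_cases hall : ∀ S ∈ v.support, S = Tm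
    · have hvs : v = Finsupp.single Tm (v Tm) :=
        Finsupp.support_subset_singleton.1 (fun S hS => Finset.mem_singleton.2 (hall S hS))
      have hvT : v Tm ≠ 0 := Finsupp.mem_support_iff.1 hT
      obtain ⟨c0, hc0⟩ : ∃ c0, v Tm = c0 := ⟨_, rfl⟩
      rw [hc0] at hvs hvT
      have heq : Finsupp.single Tm (1 : ℂ) = c0⁻¹ • v := by
        rw [hvs, Finsupp.smul_single, smul_eq_mul, inv_mul_cancel₀ hvT]
      rw [heq]
      exact W.smul_mem _ hvW
    · push_neg at hall
      obtain ⟨S, hS, hSne⟩ := hall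
      have hSneT : (S : Tableau) ≠ Tmax n lam := by
        intro h
        exact hSne (Subtype.ext (by rw [h, ← hTme]))
      obtain ⟨k, hk1, hkn, hkne⟩ := diag_sep hn hlam S.2 hSneT
      set w := diagOp (StdB n lam) k v - diagCoeff (↑S) k • v with hw
      have hwW : w ∈ W := W.sub_mem (hD k hk1 hkn v hvW) (W.smul_mem _ hvW)
      have hwap : ∀ Q : ↥(StdB n lam), w Q = (diagCoeff (↑Q) k - diagCoeff (↑S) k) * v Q := by
        intro Q
        rw [hw, Finsupp.sub_apply, Finsupp.smul_apply, diag_apply, smul_eq_mul]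
        ring
      have hsub : w.support ⊆ v.support.erase S := by
        intro Q hQ
        rw [Finsupp.mem_support_iff] at hQ
        rw [Finset.mem_erase, Finsupp.mem_support_iff]
        constructor
        · rintro rfl
          apply hQ
          rw [hwap]; ring
        · intro h0
          apply hQ
          rw [hwap, h0, mul_zero]
      have hTw : Tm ∈ w.support := by
        rw [Finsupp.mem_support_iff, hwap]
        apply mul_ne_zero
        · rw [sub_ne_zero, hTme]
          exact Ne.symm hkne
        · exact Finsupp.mem_support_iff.1 hT
      apply ih w hwW hTw
      have h1 := Finset.card_le_card hsub
      have h2 := Finset.card_erase_lt_of_mem hS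
      omega

end Dev7
section Dev8
open scoped Classical

variable {n : ℕ} {lam : ℕ → ℤ}

lemma raise_step (hn : 2 ≤ n) (v : ↥(StdB n lam) →₀ ℂ) (T0 : ↥(StdB n lam))
    (hT0 : T0 ∈ v.support) (hmin : ∀ T ∈ v.support, NN n lam ↑T0 ≤ NN n lam ↑T)
    (hne : (T0 : Tableau) ≠ Tmax n lam) :
    ∃ k : ℕ, 1 ≤ k ∧ k ≤ n - 1 ∧ ∃ Pb : ↥(StdB n lam),
      raiseOp (StdB n lam) k v Pb ≠ 0 ∧ NN n lam ↑Pb < NN n lam ↑T0 := by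
  obtain ⟨k, i, h1i, hik, hkn, hPmem, hraise, hlower, hL4⟩ := canon hn T0.2 hne
  set P := shift (↑T0) k i 1 with hPdef
  refine ⟨k, by omega, hkn, ⟨P, hPmem⟩, ?_, ?_⟩
  · rw [raise_apply]
    have key : ∀ T ∈ v.support,
        v T * ∑ i' ∈ Finset.Icc 1 k,
          raiseCoeff (↑T) k i' * (if shift (↑T) k i' 1 = ↑(⟨P, hPmem⟩ : ↥(StdB n lam)) then 1 else 0)
        = if T = T0 then v T0 * raiseCoeff (↑T0) k i else 0 := by
      intro T hT
      by_cases hTT : T = T0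
      · subst hTT
        rw [if_pos rfl]
        congr 1
        rw [Finset.sum_eq_single i]
        · rw [if_pos rfl, mul_one]
        · intro j hj hji
          rw [Finset.mem_Icc] at hj
          have hind : shift (↑T) k j 1 ≠ P := by
            intro hEq
            have := congrFun hEq (k, j)
            rw [shift_apply_self, hPdef,
              shift_apply_ne _ _ _ _ (by intro hE; rw [Prod.mk.injEq] at hE; exact hji hE.2)] at this
            simpa using this
          rw [if_neg hind, mul_zero]
        · intro habs
          exact absurd (Finset.mem_Icc.2 ⟨h1i, hik⟩) habs
      · rw [if_neg hTT]
        have hz : (∑ i' ∈ Finset.Icc 1 k, raiseCoeff (↑T) k i' *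
            (if shift (↑T) k i' 1 = ↑(⟨P, hPmem⟩ : ↥(StdB n lam)) then 1 else 0)) = 0 := by
          apply Finset.sum_eq_zero
          intro j hj
          rw [Finset.mem_Icc] at hj
          have hind : shift (↑T) k j 1 ≠ P := by
            intro hEq
            have hTj : (↑T : Tableau) = shift P k j (-1) := shift_eq_iff.1 hEq
            rcases lt_trichotomy j i with h | h | h
            · exact hL4 j hj.1 h (hTj ▸ T.2)
            · subst h
              apply hTT
              apply Subtype.ext
              rw [hTj, hPdef, shift_shift_cancel]
            · have hTmem : shift (shift (↑T0 : Tableau) k i 1) k j (-1) ∈ StdB n lam := by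
                rw [← hPdef, ← hTj]; exact T.2
              have hmove := NN_move hn T0.2 hTmem h1i h hj.2 hkn
              have hwt : wtp n (k, j) < wtp n (k, i) := wtp_lt hn h (by omega)
              have hNT : NN n lam (↑T) < NN n lam (↑T0) := by
                rw [hTj, hPdef]
                omega
              have := hmin T hT
              omega
          rw [if_neg hind, mul_zero]
        rw [hz, mul_zero]
    rw [Finset.sum_congr rfl key, Finset.sum_ite_eq' v.support T0, if_pos hT0]
    exact mul_ne_zero (Finsupp.mem_support_iff.1 hT0) hraise
  · have hsh := NN_shift hn T0.2 hPmem h1i hik hkn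
    rw [← hPdef] at hsh
    have hw : 0 < wtp n (k, i) := by simp only [wtp]; positivity
    show NN n lam P < NN n lam ↑T0
    omega

lemma reach (hn : 2 ≤ n) (hlam : ∀ j : ℕ, 1 ≤ j → j < n → lam (j+1) ≤ lam j)
    (W : Submodule ℂ (↥(StdB n lam) →₀ ℂ))
    (hRL : ∀ k, 1 ≤ k → k ≤ n - 1 → ∀ v ∈ W,
      raiseOp (StdB n lam) k v ∈ W ∧ lowerOp (StdB n lam) k v ∈ W)
    (hD : ∀ k, 1 ≤ k → k ≤ n → ∀ v ∈ W, diagOp (StdB n lam) k v ∈ W)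
    (Tm : ↥(StdB n lam)) (hTme : (Tm : Tableau) = Tmax n lam) :
    ∀ m : ℕ, ∀ v ∈ W, (∃ T ∈ v.support, NN n lam ↑T ≤ m) →
      Finsupp.single Tm (1 : ℂ) ∈ W := by
  intro m
  induction m with
  | zero =>
    rintro v hvW ⟨T, hT, hNT⟩
    obtain ⟨T0, hT0, hmin⟩ := Finset.exists_min_image v.support (fun T => NN n lam ↑T) ⟨T, hT⟩
    have hN0 : NN n lam ↑T0 = 0 := by
      have := hmin T hT
      omega
    have hTe : (T0 : Tableau) = Tmax n lam := NN_eq_zero hn T0.2 hN0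
    have : T0 = Tm := Subtype.ext (by rw [hTe, hTme])
    exact extract hn hlam W hD Tm hTme v.support.card v hvW (this ▸ hT0) le_rfl
  | succ m ih =>
    rintro v hvW ⟨T, hT, hNT⟩
    obtain ⟨T0, hT0, hmin⟩ := Finset.exists_min_image v.support (fun T => NN n lam ↑T) ⟨T, hT⟩
    by_cases hTe : (T0 : Tableau) = Tmax n lam
    · have : T0 = Tm := Subtype.ext (by rw [hTe, hTme])
      exact extract hn hlam W hD Tm hTme v.support.card v hvW (this ▸ hT0) le_rfl
    · obtain ⟨k, hk1, hkn, Pb, hPb, hNPb⟩ := raise_step hn v T0 hT0 hmin hTe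
      have hwW : raiseOp (StdB n lam) k v ∈ W := (hRL k hk1 hkn v hvW).1
      apply ih _ hwW
      refine ⟨Pb, Finsupp.mem_support_iff.2 hPb, ?_⟩
      have := hmin T hT
      omega

lemma gen (hn : 2 ≤ n) (hlam : ∀ j : ℕ, 1 ≤ j → j < n → lam (j+1) ≤ lam j)
    (W : Submodule ℂ (↥(StdB n lam) →₀ ℂ))
    (hRL : ∀ k, 1 ≤ k → k ≤ n - 1 → ∀ v ∈ W,
      raiseOp (StdB n lam) k v ∈ W ∧ lowerOp (StdB n lam) k v ∈ W)
    (Tm : ↥(StdB n lam)) (hTme : (Tm : Tableau) = Tmax n lam)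
    (hsingle : Finsupp.single Tm (1 : ℂ) ∈ W) :
    ∀ m : ℕ, ∀ Q : ↥(StdB n lam), NN n lam ↑Q ≤ m → Finsupp.single Q (1 : ℂ) ∈ W := by
  intro m
  induction m with
  | zero =>
    intro Q hNQ
    have hTe : (Q : Tableau) = Tmax n lam := NN_eq_zero hn Q.2 (by omega)
    have : Q = Tm := Subtype.ext (by rw [hTe, hTme])
    rw [this]; exact hsingle
  | succ m ih =>
    intro Q hNQ
    by_cases hTe : (Q : Tableau) = Tmax n lam
    · have : Q = Tm := Subtype.ext (by rw [hTe, hTme])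
      rw [this]; exact hsingle
    · obtain ⟨k, i, h1i, hik, hkn, hPmem, hraise, hlower, hL4⟩ := canon hn Q.2 hTe
      set P := shift (↑Q) k i 1 with hPdef
      have hNP : NN n lam P < NN n lam ↑Q := by
        have hsh := NN_shift hn Q.2 hPmem h1i hik hkn
        rw [← hPdef] at hsh
        have hw : 0 < wtp n (k, i) := by simp only [wtp]; positivity
        omega
      have hPW : Finsupp.single (⟨P, hPmem⟩ : ↥(StdB n lam)) (1 : ℂ) ∈ W :=
        ih ⟨P, hPmem⟩ (by show NN n lam P ≤ m; omega)
      have hu : lowerOp (StdB n lam) k (Finsupp.single (⟨P, hPmem⟩ : ↥(StdB n lam)) 1) ∈ W :=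
        (hRL k (by omega) hkn _ hPW).2
      rw [lower_single] at hu
      have hiIcc : i ∈ Finset.Icc 1 k := Finset.mem_Icc.2 ⟨h1i, hik⟩
      have hsplit :
          (∑ i' ∈ Finset.Icc 1 k, lowerCoeff P k i' • emb (StdB n lam) (shift P k i' (-1)))
          = lowerCoeff P k i • emb (StdB n lam) (shift P k i (-1))
            + ∑ i' ∈ (Finset.Icc 1 k).erase i,
                lowerCoeff P k i' • emb (StdB n lam) (shift P k i' (-1)) :=
        (Finset.add_sum_erase _ _ hiIcc).symm
      have hrest : ∀ i' ∈ (Finset.Icc 1 k).erase i,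
          lowerCoeff P k i' • emb (StdB n lam) (shift P k i' (-1)) ∈ W := by
        intro i' hi'
        rw [Finset.mem_erase, Finset.mem_Icc] at hi'
        by_cases hmem : shift P k i' (-1) ∈ StdB n lam
        · rcases lt_or_gt_of_ne hi'.1 with h | h
          · exact absurd hmem (hL4 i' hi'.2.1 h)
          · have hmove := NN_move hn Q.2 (by rw [← hPdef]; exact hmem) h1i h hi'.2.2 hkn
            have hwt : wtp n (k, i') < wtp n (k, i) := wtp_lt hn h (by omega)
            have hNT : NN n lam (shift P k i' (-1)) ≤ m := by
              have hPP : NN n lam P = NN n lam (shift (↑Q) k i 1) := by rw [hPdef]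
              rw [hPdef]
              omega
            have := ih ⟨shift P k i' (-1), hmem⟩ hNT
            rw [emb_of_mem hmem]
            exact W.smul_mem _ this
        · rw [emb_of_notMem hmem, smul_zero]
          exact W.zero_mem
      have hXW : lowerCoeff P k i • emb (StdB n lam) (shift P k i (-1)) ∈ W := by
        have heq : lowerCoeff P k i • emb (StdB n lam) (shift P k i (-1))
            = (∑ i' ∈ Finset.Icc 1 k, lowerCoeff P k i' • emb (StdB n lam) (shift P k i' (-1)))
              - ∑ i' ∈ (Finset.Icc 1 k).erase i,
                  lowerCoeff P k i' • emb (StdB n lam) (shift P k i' (-1)) := by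
          rw [hsplit, add_sub_cancel_right]
        rw [heq]
        exact W.sub_mem hu (Submodule.sum_mem W hrest)
      have hback : shift P k i (-1) = (↑Q : Tableau) := by
        rw [hPdef, shift_shift_cancel]
      rw [hback, emb_of_mem Q.2] at hXW
      have hQeta : (⟨(↑Q : Tableau), Q.2⟩ : ↥(StdB n lam)) = Q := rfl
      rw [hQeta] at hXW
      have hfin : Finsupp.single Q (1 : ℂ)
          = (lowerCoeff P k i)⁻¹ • (lowerCoeff P k i • Finsupp.single Q (1 : ℂ)) := by
        rw [smul_smul, inv_mul_cancel₀ hlower, one_smul]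
      rw [hfin]
      exact W.smul_mem _ hXW

end Dev8
/-- The span of the standard tableaux with fixed dominant integral top row is a simple module:
the only subspaces invariant under all the Gelfand–Tsetlin operators are `0` and the whole
space. -/
theorem standard_tableaux_module_is_simple
    (n : ℕ) (hn : 2 ≤ n) (lam : ℕ → ℤ)
    (hlam : ∀ j : ℕ, 1 ≤ j → j < n → lam (j+1) ≤ lam j) :
    ∀ W : Submodule ℂ (↥(StdB n lam) →₀ ℂ),
      (∀ k, 1 ≤ k → k ≤ n - 1 → ∀ v ∈ W,
        raiseOp (StdB n lam) k v ∈ W ∧ lowerOp (StdB n lam) k v ∈ W) →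
      (∀ k, 1 ≤ k → k ≤ n → ∀ v ∈ W, diagOp (StdB n lam) k v ∈ W) →
      W = ⊥ ∨ W = ⊤ := by
  classical
  intro W hRL hD
  by_cases hbot : W = ⊥
  · left; exact hbot
  right
  obtain ⟨v, hvW, hv0⟩ := (Submodule.ne_bot_iff W).1 hbot
  have hTmem : Tmax n lam ∈ StdB n lam := Tmax_mem hn hlam
  set Tm : ↥(StdB n lam) := ⟨Tmax n lam, hTmem⟩ with hTmdef
  obtain ⟨T, hT⟩ := Finsupp.support_nonempty_iff.2 hv0
  have hsingle : Finsupp.single Tm (1 : ℂ) ∈ W :=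
    reach hn hlam W hRL hD Tm rfl (NN n lam ↑T) v hvW ⟨T, hT, le_rfl⟩
  have hall : ∀ Q : ↥(StdB n lam), Finsupp.single Q (1 : ℂ) ∈ W := fun Q =>
    gen hn hlam W hRL Tm rfl hsingle (NN n lam ↑Q) Q le_rfl
  rw [eq_top_iff]
  intro x _
  have hx : x.sum (fun T c => c • Finsupp.single T (1 : ℂ)) = x := by
    have hc : ∀ (T : ↥(StdB n lam)) (c : ℂ), c • Finsupp.single T (1 : ℂ) = Finsupp.single T c := by
      intro T c
      rw [Finsupp.smul_single, smul_eq_mul, mul_one]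
    rw [Finsupp.sum_congr (fun T _ => hc T (x T))]
    exact Finsupp.sum_single x
  rw [← hx, Finsupp.sum]
  apply Submodule.sum_mem
  intro T _
  exact W.smul_mem _ (hall T)

end GT
end

section
/- Let G be a relation graph and T(L) a G-realization. Then for every row 1 ≤ k ≤ n−1 and all 1 ≤ i < j ≤ k, the entries satisfy l_{ki} ≠ l_{kj}. Consequently, all denominators ∏_{j≠i}(l_{ki} − l_{kj}) appearing in the Gelfand–Tsetlin formulas are nonzero on every tableau of B_G(T(L)). -/
namespace GT

lemma nonneg_add_nonneg {z w : ℂ} (hz : IsNonnegInt z) (hw : IsNonnegInt w) :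
    IsNonnegInt (z + w) := by
  obtain ⟨m, rfl⟩ := hz; obtain ⟨m', rfl⟩ := hw
  exact ⟨m + m', by push_cast; ring⟩

lemma pos_add_nonneg {z w : ℂ} (hz : IsPosInt z) (hw : IsNonnegInt w) :
    IsPosInt (z + w) := by
  obtain ⟨m, rfl⟩ := hz; obtain ⟨m', rfl⟩ := hw
  exact ⟨m + m', by push_cast; ring⟩

lemma nonneg_add_pos {z w : ℂ} (hz : IsNonnegInt z) (hw : IsPosInt w) :
    IsPosInt (z + w) := by
  obtain ⟨m, rfl⟩ := hz; obtain ⟨m', rfl⟩ := hw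
  exact ⟨m + m', by push_cast; ring⟩

lemma IsPosInt.ne_zero {z : ℂ} (hz : IsPosInt z) : z ≠ 0 := by
  obtain ⟨m, rfl⟩ := hz
  have : ((m : ℂ) + 1) = ((m + 1 : ℕ) : ℂ) := by push_cast; ring
  rw [this]
  exact_mod_cast Nat.succ_ne_zero m

/-- For an arrow at row `n`, the second coordinate increases. -/
lemma rowN_arrow_lt (n : ℕ) (E : (ℕ × ℕ) → (ℕ × ℕ) → Prop) (hE : IsRelationGraph n E)
    {a b : ℕ × ℕ} (h : E a b) (ha : a.1 = n) (hb : b.1 = n) : a.2 < b.2 := by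
  obtain ⟨haV, hbV, hcase⟩ := hE.1 a b h
  have hne : a.2 ≠ b.2 := by
    rcases hcase with h1 | h1 | h1
    · omega
    · omega
    · exact h1.2.2
  rcases lt_or_gt_of_ne hne with hlt | hgt
  · exact hlt
  · exfalso
    have hpath : Relation.TransGen E (n, a.2) (n, b.2) := by
      have : a = (n, a.2) := by rw [← ha]
      have hb' : b = (n, b.2) := by rw [← hb]
      rw [← this, ← hb']
      exact Relation.TransGen.single h
    exact hE.2.1 n b.2 a.2 hbV.1 hgt (ha ▸ haV.2.1) hpath

/-- Single arrow step: the difference is a nonnegative integer, and positive unless the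
arrow goes down or stays in row `n`. -/
lemma step_diff (n : ℕ) (E : (ℕ × ℕ) → (ℕ × ℕ) → Prop) (hE : IsRelationGraph n E)
    (M : Tableau) (hM : Satisfies n M E) {a b : ℕ × ℕ} (h : E a b) :
    IsNonnegInt (M a - M b) ∧
      (IsPosInt (M a - M b) ∨ (a.1 = n ∧ b.1 = n) ∨ b.1 < a.1) := by
  obtain ⟨haV, hbV, hcase⟩ := hE.1 a b h
  have h' : E (a.1, a.2) (b.1, b.2) := by simpa using h
  have hS := hM a.1 a.2 b.1 b.2 h'
  rcases hcase with h1 | h1 | h1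
  · -- down arrow
    have := (hS.1 (Or.inl h1))
    simp only [Prod.mk.eta] at this
    exact ⟨this, Or.inr (Or.inr (by omega))⟩
  · -- up arrow
    have hp := hS.2 h1
    simp only [Prod.mk.eta] at hp
    obtain ⟨m, hm⟩ := hp
    exact ⟨⟨m + 1, by rw [hm]; push_cast; ring⟩, Or.inl ⟨m, hm⟩⟩
  · -- row n arrow
    have hlt : a.2 < b.2 := rowN_arrow_lt n E hE h h1.1 h1.2.1
    have := hS.1 (Or.inr ⟨h1.1, h1.2.1, hlt⟩)
    simp only [Prod.mk.eta] at this
    exact ⟨this, Or.inr (Or.inl ⟨h1.1, h1.2.1⟩)⟩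

lemma mem_vtx_of_transGen_left (n : ℕ) (E : (ℕ × ℕ) → (ℕ × ℕ) → Prop)
    (hE : IsRelationGraph n E) {a b : ℕ × ℕ} (h : Relation.TransGen E a b) :
    a ∈ Vtx n := by
  induction h with
  | single hab => exact (hE.1 _ _ hab).1
  | tail _ _ ih => exact ih

/-- Along a directed path, the difference is a nonnegative integer, positive unless the
path stays in row `n` or ends strictly lower. -/
lemma path_diff (n : ℕ) (E : (ℕ × ℕ) → (ℕ × ℕ) → Prop) (hE : IsRelationGraph n E)
    (M : Tableau) (hM : Satisfies n M E) {a b : ℕ × ℕ}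
    (h : Relation.TransGen E a b) :
    IsNonnegInt (M a - M b) ∧
      (IsPosInt (M a - M b) ∨ (a.1 = n ∧ b.1 = n) ∨ b.1 < a.1) := by
  induction h with
  | single hab => exact step_diff n E hE M hM hab
  | tail hab hbc ih =>
    rename_i b' c
    obtain ⟨ih1, ih2⟩ := ih
    obtain ⟨s1, s2⟩ := step_diff n E hE M hM hbc
    have hsum : M a - M c = (M a - M b') + (M b' - M c) := by ring
    refine ⟨hsum ▸ nonneg_add_nonneg ih1 s1, ?_⟩
    rcases ih2 with hp | hcase
    · exact Or.inl (hsum ▸ pos_add_nonneg hp s1)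
    · rcases s2 with hp | hcase2
      · exact Or.inl (hsum ▸ nonneg_add_pos ih1 hp)
      · have hbn : b'.1 ≤ n := (hE.1 _ _ hbc).1.2.2
        have han : a.1 ≤ n := (mem_vtx_of_transGen_left n E hE hab).2.2
        rcases hcase with ⟨h1, h2⟩ | h1 <;> rcases hcase2 with ⟨h3, h4⟩ | h3 <;>
          first
          | exact Or.inr (Or.inl ⟨by omega, by omega⟩)
          | exact Or.inr (Or.inr (by omega))

/-- Row entries of any realization are pairwise distinct in rows `k ≤ n - 1`. -/
lemma realization_row_ne (n : ℕ) (hn : 2 ≤ n) (E : (ℕ × ℕ) → (ℕ × ℕ) → Prop)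
    (hE : IsRelationGraph n E) (M : Tableau) (hM : IsRealization n E M)
    (k i j : ℕ) (hk : k ≤ n - 1) (hi : 1 ≤ i) (hij : i < j) (hjk : j ≤ k) :
    M (k, i) ≠ M (k, j) := by
  intro heq
  have hkn : k < n := by omega
  have hiV : (k, i) ∈ Vtx n := ⟨hi, by omega, by omega⟩
  have hjV : (k, j) ∈ Vtx n := ⟨by omega, by omega, by omega⟩
  have hint : IsInt (M (k, i) - M (k, j)) := ⟨0, by rw [heq]; push_cast; ring⟩
  have heqv := hM.2 k i j hk hiV hjV (by omega) hint
  rcases hE.2.2.2.1 k i j hkn hiV hjV (by omega) heqv with hp | hp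
  · have := (path_diff n E hE M hM.1 hp).2
    rcases this with hpos | ⟨h1, _⟩ | h1
    · exact hpos.ne_zero (by rw [heq]; ring)
    · omega
    · omega
  · have := (path_diff n E hE M hM.1 hp).2
    rcases this with hpos | ⟨h1, _⟩ | h1
    · exact hpos.ne_zero (by rw [heq]; ring)
    · omega
    · omega

/-- For a relation graph `G` and a `G`-realization `T(L)`, entries in each row `k ≤ n-1` are
pairwise distinct; consequently the denominators of the Gelfand–Tsetlin formulas are nonzero
on every tableau of `B_G(T(L))`. -/
theorem realization_row_entries_distinct
    (n : ℕ) (hn : 2 ≤ n) (E : (ℕ × ℕ) → (ℕ × ℕ) → Prop) (hE : IsRelationGraph n E)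
    (L : Tableau) (hL : IsRealization n E L) :
    (∀ k i j : ℕ, 1 ≤ k → k ≤ n - 1 → 1 ≤ i → i < j → j ≤ k → L (k, i) ≠ L (k, j)) ∧
    (∀ M ∈ BG n E L, ∀ k i : ℕ, 1 ≤ i → i ≤ k → k ≤ n - 1 →
      (∏ j ∈ (Finset.Icc 1 k).erase i, (M (k, i) - M (k, j))) ≠ 0) := by
  constructor
  · intro k i j _ hk hi hij hjk
    exact realization_row_ne n hn E hE L hL k i j hk hi hij hjk
  · rintro M ⟨z, _, _, hM⟩ k i hi hik hk
    rw [Finset.prod_ne_zero_iff]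
    intro j hj
    rw [Finset.mem_erase, Finset.mem_Icc] at hj
    obtain ⟨hji, hj1, hjk⟩ := hj
    rw [sub_ne_zero]
    rcases lt_or_gt_of_ne hji.symm with hlt | hgt
    · exact realization_row_ne n hn E hE M hM k i j hk hi hlt hjk
    · exact (realization_row_ne n hn E hE M hM k j i hk hj1 hgt hik).symm
end GT
end

section
/- Let G be a relation graph, T(L) a G-realization, T(R) ∈ B_G(T(L)), and z ∈ ℤ₀∖{0} such that T(R+z) is a G-realization and E⁺_{G(R)} ⊆ E⁺_{G(R+z)}. Then there exists (i,j) ∈ 𝔙 with z_{ij} ≠ 0 such that E⁺_{G(R)} ⊆ E⁺_{G(R+z_{ij}δ^{ij})} ⊆ E⁺_{G(R+z)}. -/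
namespace GT

private lemma isNonnegInt_iff' {x : ℂ} : IsNonnegInt x ↔ ∃ m : ℤ, 0 ≤ m ∧ x = (m : ℂ) := by
  constructor
  · rintro ⟨m, hm⟩
    exact ⟨(m : ℤ), Int.natCast_nonneg m, by exact_mod_cast hm⟩
  · rintro ⟨m, hm0, hm⟩
    refine ⟨m.toNat, ?_⟩
    rw [hm]
    exact_mod_cast (Int.toNat_of_nonneg hm0).symm

private lemma eplus_char {n : ℕ} {M : Tableau} {a b : ℕ × ℕ} :
    (a, b) ∈ Eplus (graphOf n M) ↔
      a ∈ Vtx n ∧ b ∈ Vtx n ∧ a.1 = b.1 + 1 ∧ IsNonnegInt (M a - M b) := by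
  constructor
  · rintro ⟨⟨ha, hb, h⟩, hrow⟩
    replace hrow : a.1 = b.1 + 1 := hrow
    refine ⟨ha, hb, hrow, ?_⟩
    rcases h with ⟨_, h⟩ | ⟨h, _⟩ | ⟨hx, hy, _, _⟩
    · exact h
    · replace h : b.1 = a.1 + 1 := h
      omega
    · replace hx : a.1 = n := hx
      replace hy : b.1 = n := hy
      omega
  · rintro ⟨ha, hb, hrow, h⟩
    exact ⟨⟨ha, hb, Or.inl ⟨hrow, h⟩⟩, hrow⟩

private lemma h2_extract {n : ℕ} {R : Tableau} {z : ℕ × ℕ → ℤ}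
    (h2 : Eplus (graphOf n R) ⊆ Eplus (graphOf n (addZ R z)))
    {a b : ℕ × ℕ} (ha : a ∈ Vtx n) (hb : b ∈ Vtx n) (hrow : a.1 = b.1 + 1)
    {m : ℤ} (hm : R a - R b = (m : ℂ)) (hm0 : 0 ≤ m) :
    0 ≤ m + z a - z b := by
  have hedge := h2 (eplus_char.mpr ⟨ha, hb, hrow, isNonnegInt_iff'.mpr ⟨m, hm0, hm⟩⟩)
  rw [eplus_char] at hedge
  obtain ⟨m', hm'0, hm'⟩ := isNonnegInt_iff'.mp hedge.2.2.2
  simp only [addZ] at hm'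
  have hcast : (m' : ℂ) = ((m + z a - z b : ℤ) : ℂ) := by
    push_cast
    linear_combination hm - hm'
  have : m' = m + z a - z b := by exact_mod_cast hcast
  omega

/-- The key reduction: if the single shift at `v` is compatible with all down-arrows
touching `v`, then both inclusions hold. -/
private lemma step_lemma {n : ℕ} {R : Tableau} {z : ℕ × ℕ → ℤ} {v : ℕ × ℕ}
    (h2 : Eplus (graphOf n R) ⊆ Eplus (graphOf n (addZ R z)))
    (HA1 : ∀ a : ℕ × ℕ, a ∈ Vtx n → a.1 = v.1 + 1 → ∀ m : ℤ, R a - R v = (m : ℂ) →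
      0 ≤ m → z v ≤ m)
    (HA2 : ∀ a : ℕ × ℕ, a ∈ Vtx n → a.1 = v.1 + 1 → ∀ m : ℤ, R a - R v = (m : ℂ) →
      z v ≤ m → 0 ≤ m + z a - z v)
    (HB1 : ∀ b : ℕ × ℕ, b ∈ Vtx n → v.1 = b.1 + 1 → ∀ m : ℤ, R v - R b = (m : ℂ) →
      0 ≤ m → 0 ≤ m + z v)
    (HB2 : ∀ b : ℕ × ℕ, b ∈ Vtx n → v.1 = b.1 + 1 → ∀ m : ℤ, R v - R b = (m : ℂ) →
      0 ≤ m + z v → z b ≤ m + z v) :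
    Eplus (graphOf n R) ⊆ Eplus (graphOf n (addZ R (sing v (z v)))) ∧
    Eplus (graphOf n (addZ R (sing v (z v)))) ⊆ Eplus (graphOf n (addZ R z)) := by
  have hval : ∀ p : ℕ × ℕ, addZ R (sing v (z v)) p = R p + (if p = v then ((z v : ℤ) : ℂ) else 0) := by
    intro p
    simp only [addZ, sing]
    split <;> simp
  constructor
  · rintro ⟨a, b⟩ hab
    rw [eplus_char] at hab ⊢
    obtain ⟨ha, hb, hrow, hnn⟩ := hab
    obtain ⟨m, hm0, hm⟩ := isNonnegInt_iff'.mp hnn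
    refine ⟨ha, hb, hrow, ?_⟩
    by_cases hav : a = v
    · by_cases hbv : b = v
      · exfalso; rw [hav, hbv] at hrow; omega
      · subst hav
        have h1 := HB1 b hb hrow m hm hm0
        refine isNonnegInt_iff'.mpr ⟨m + z a, h1, ?_⟩
        rw [hval a, hval b, if_pos rfl, if_neg hbv]
        push_cast
        linear_combination hm
    · by_cases hbv : b = v
      · subst hbv
        have h1 := HA1 a ha hrow m hm hm0
        refine isNonnegInt_iff'.mpr ⟨m - z b, by omega, ?_⟩
        rw [hval a, hval b, if_pos rfl, if_neg hav]
        push_cast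
        linear_combination hm
      · refine isNonnegInt_iff'.mpr ⟨m, hm0, ?_⟩
        rw [hval a, hval b, if_neg hav, if_neg hbv]
        rw [add_zero, add_zero]
        exact hm
  · rintro ⟨a, b⟩ hab
    rw [eplus_char] at hab ⊢
    obtain ⟨ha, hb, hrow, hnn⟩ := hab
    obtain ⟨m', hm'0, hm'⟩ := isNonnegInt_iff'.mp hnn
    rw [hval a, hval b] at hm'
    refine ⟨ha, hb, hrow, ?_⟩
    by_cases hav : a = v
    · by_cases hbv : b = v
      · exfalso; rw [hav, hbv] at hrow; omega
      · subst hav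
        rw [if_pos rfl, if_neg hbv, add_zero] at hm'
        -- hm' : R a + z a - R b = m'
        have hm : R a - R b = ((m' - z a : ℤ) : ℂ) := by push_cast; linear_combination hm'
        have h1 := HB2 b hb hrow (m' - z a) hm (by omega)
        refine isNonnegInt_iff'.mpr ⟨m' - z b, by omega, ?_⟩
        simp only [addZ]
        push_cast
        linear_combination hm'
    · by_cases hbv : b = v
      · subst hbv
        rw [if_pos rfl, if_neg hav, add_zero] at hm'
        have hm : R a - R b = ((m' + z b : ℤ) : ℂ) := by push_cast; linear_combination hm'
        have h1 := HA2 a ha hrow (m' + z b) hm (by omega)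
        refine isNonnegInt_iff'.mpr ⟨m' + z a, by omega, ?_⟩
        simp only [addZ]
        push_cast
        linear_combination hm'
      · rw [if_neg hav, if_neg hbv, add_zero, add_zero] at hm'
        have hmem : (a, b) ∈ Eplus (graphOf n R) :=
          eplus_char.mpr ⟨ha, hb, hrow, isNonnegInt_iff'.mpr ⟨m', hm'0, hm'⟩⟩
        exact (eplus_char.mp (h2 hmem)).2.2.2


/-- Proposition 4.7. -/
theorem proposition_general
    (n : ℕ) (hn : 2 ≤ n) (E : (ℕ × ℕ) → (ℕ × ℕ) → Prop) (hE : IsRelationGraph n E)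
    (L : Tableau) (hL : IsRealization n E L)
    (R : Tableau) (hR : R ∈ BG n E L)
    (z : ℕ × ℕ → ℤ) (hz : ZZ0 n z) (hzne : z ≠ 0)
    (h1 : IsRealization n E (addZ R z))
    (h2 : Eplus (graphOf n R) ⊆ Eplus (graphOf n (addZ R z))) :
    ∃ v ∈ Vtx n, z v ≠ 0 ∧
      Eplus (graphOf n R) ⊆ Eplus (graphOf n (addZ R (sing v (z v)))) ∧
      Eplus (graphOf n (addZ R (sing v (z v)))) ⊆ Eplus (graphOf n (addZ R z)) := by
  classical
  obtain ⟨v1, hv1⟩ : ∃ p, z p ≠ 0 := by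
    by_contra h
    push_neg at h
    exact hzne (funext h)
  have hVmem : ∀ p : ℕ × ℕ, z p ≠ 0 → p ∈ Vtx n := by
    intro p hp
    by_contra h
    exact hp (hz.2 p h)
  have hVfin : (Vtx n).Finite := by
    apply Set.Finite.subset (Set.finite_Icc ((0, 0) : ℕ × ℕ) (n, n))
    rintro ⟨i, j⟩ ⟨h1, h2, h3⟩
    simp only [Set.mem_Icc, Prod.le_def]
    omega
  by_cases hpos : ∃ p, 0 < z p
  · -- positive case: maximize R p + z p in the coset, then the row
    obtain ⟨w, hw⟩ := hpos
    set C : Set (ℕ × ℕ) := {p | p ∈ Vtx n ∧ 0 < z p ∧ ∃ m : ℤ, R p - R w = (m : ℂ)} with hC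
    have hCfin : C.Finite := hVfin.subset (fun p hp => hp.1)
    have hwC : w ∈ C := ⟨hVmem w (by omega), hw, 0, by simp⟩
    set g : ℕ × ℕ → ℤ := fun p =>
      if h : ∃ m : ℤ, R p - R w = (m : ℂ) then h.choose else 0 with hgdef
    have hg : ∀ p ∈ C, R p - R w = ((g p : ℤ) : ℂ) := by
      intro p hp
      simp only [hgdef, dif_pos hp.2.2]
      exact hp.2.2.choose_spec
    set key : ℕ × ℕ → ℤ := fun p => ((n : ℤ) + 2) * (g p + z p) + p.1 with hkey
    obtain ⟨v, hvC, hvmax⟩ := Set.exists_max_image C key hCfin ⟨w, hwC⟩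
    obtain ⟨hvV, hvpos, -⟩ := id hvC
    have hgv := hg v hvC
    have hvn : (v.1 : ℤ) ≤ n := by exact_mod_cast hvV.2.2
    refine ⟨v, hvV, by omega, ?_⟩
    refine step_lemma h2 ?_ ?_ ?_ ?_
    · -- HA1
      intro a ha hrow m hm hm0
      by_contra hlt
      push_neg at hlt
      have hza := h2_extract h2 ha hvV hrow hm hm0
      have haC : a ∈ C := ⟨ha, by omega, ⟨m + g v, by push_cast; linear_combination hm + hgv⟩⟩
      have hga : g a = m + g v := by
        have := hg a haC
        have hcast : ((g a : ℤ) : ℂ) = ((m + g v : ℤ) : ℂ) := by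
          rw [← this]; push_cast; linear_combination hm + hgv
        exact_mod_cast hcast
      have hkv := hvmax a haC
      have han : (a.1 : ℤ) = (v.1 : ℤ) + 1 := by exact_mod_cast hrow
      simp only [hkey] at hkv
      have hS : g v + z v ≤ g a + z a := by omega
      have hmul : ((n : ℤ) + 2) * (g v + z v) ≤ ((n : ℤ) + 2) * (g a + z a) :=
        mul_le_mul_of_nonneg_left hS (by positivity)
      omega
    · -- HA2
      intro a ha hrow m hm hge
      have hm0 : 0 ≤ m := le_trans (le_of_lt hvpos) hge
      exact h2_extract h2 ha hvV hrow hm hm0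
    · -- HB1
      intro b hb hrow m hm hm0
      omega
    · -- HB2
      intro b hb hrow m hm h0
      by_contra hlt
      push_neg at hlt
      have hbC : b ∈ C := ⟨hb, by omega, ⟨g v - m, by push_cast; linear_combination hgv - hm⟩⟩
      have hgb : g b = g v - m := by
        have := hg b hbC
        have hcast : ((g b : ℤ) : ℂ) = ((g v - m : ℤ) : ℂ) := by
          rw [← this]; push_cast; linear_combination hgv - hm
        exact_mod_cast hcast
      have hkv := hvmax b hbC
      have hbn : (0 : ℤ) ≤ b.1 := by positivity
      simp only [hkey] at hkv
      have hS : g v + z v + 1 ≤ g b + z b := by omega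
      have hmul : ((n : ℤ) + 2) * (g v + z v + 1) ≤ ((n : ℤ) + 2) * (g b + z b) :=
        mul_le_mul_of_nonneg_left hS (by positivity)
      nlinarith
  · -- negative case: all z ≤ 0; minimize R p + z p in the coset, then the row
    push_neg at hpos
    have hv1neg : z v1 < 0 := lt_of_le_of_ne (hpos v1) hv1
    set C : Set (ℕ × ℕ) := {p | p ∈ Vtx n ∧ z p < 0 ∧ ∃ m : ℤ, R p - R v1 = (m : ℂ)} with hC
    have hCfin : C.Finite := hVfin.subset (fun p hp => hp.1)
    have hwC : v1 ∈ C := ⟨hVmem v1 hv1, hv1neg, 0, by simp⟩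
    set g : ℕ × ℕ → ℤ := fun p =>
      if h : ∃ m : ℤ, R p - R v1 = (m : ℂ) then h.choose else 0 with hgdef
    have hg : ∀ p ∈ C, R p - R v1 = ((g p : ℤ) : ℂ) := by
      intro p hp
      simp only [hgdef, dif_pos hp.2.2]
      exact hp.2.2.choose_spec
    set key : ℕ × ℕ → ℤ := fun p => ((n : ℤ) + 2) * (g p + z p) + p.1 with hkey
    obtain ⟨v, hvC, hvmin⟩ := Set.exists_min_image C key hCfin ⟨v1, hwC⟩
    obtain ⟨hvV, hvneg, -⟩ := id hvC
    have hgv := hg v hvC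
    have hvn : (v.1 : ℤ) ≤ n := by exact_mod_cast hvV.2.2
    refine ⟨v, hvV, by omega, ?_⟩
    refine step_lemma h2 ?_ ?_ ?_ ?_
    · -- HA1
      intro a ha hrow m hm hm0
      omega
    · -- HA2
      intro a ha hrow m hm hge
      by_cases hm0 : 0 ≤ m
      · exact h2_extract h2 ha hvV hrow hm hm0
      · push_neg at hm0
        by_contra hlt
        push_neg at hlt
        have haC : a ∈ C := ⟨ha, by omega, ⟨m + g v, by push_cast; linear_combination hm + hgv⟩⟩
        have hga : g a = m + g v := by
          have := hg a haC
          have hcast : ((g a : ℤ) : ℂ) = ((m + g v : ℤ) : ℂ) := by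
            rw [← this]; push_cast; linear_combination hm + hgv
          exact_mod_cast hcast
        have hkv := hvmin a haC
        have han : (a.1 : ℤ) ≤ n := by exact_mod_cast ha.2.2
        have hvn0 : (0 : ℤ) ≤ v.1 := by positivity
        simp only [hkey] at hkv
        have hS : g a + z a + 1 ≤ g v + z v := by omega
        have hmul : ((n : ℤ) + 2) * (g a + z a + 1) ≤ ((n : ℤ) + 2) * (g v + z v) :=
          mul_le_mul_of_nonneg_left hS (by positivity)
        nlinarith
    · -- HB1
      intro b hb hrow m hm hm0
      by_contra hlt
      push_neg at hlt
      have hzb := h2_extract h2 hvV hb hrow hm hm0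
      have hbC : b ∈ C := ⟨hb, by omega, ⟨g v - m, by push_cast; linear_combination hgv - hm⟩⟩
      have hgb : g b = g v - m := by
        have := hg b hbC
        have hcast : ((g b : ℤ) : ℂ) = ((g v - m : ℤ) : ℂ) := by
          rw [← this]; push_cast; linear_combination hgv - hm
        exact_mod_cast hcast
      have hkv := hvmin b hbC
      have hbn : (b.1 : ℤ) + 1 = v.1 := by exact_mod_cast hrow.symm
      simp only [hkey] at hkv
      have hS : g b + z b ≤ g v + z v := by omega
      have hmul : ((n : ℤ) + 2) * (g b + z b) ≤ ((n : ℤ) + 2) * (g v + z v) :=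
        mul_le_mul_of_nonneg_left hS (by positivity)
      omega
    · -- HB2
      intro b hb hrow m hm h0
      have hm0 : 0 ≤ m := by omega
      have := h2_extract h2 hvV hb hrow hm hm0
      omega


end GT
end

section
/- Let G be a relation graph and T(L) a G-realization. For any T(R) ∈ B_G(T(L)), the linear span of the set N_G(T(R)) = {T(S) ∈ B_G(T(L)) : E⁺_{G(R)} ⊆ E⁺_{G(S)}} is invariant under all the Gelfand–Tsetlin operators E_{k,k+1}, E_{k+1,k}, E_{kk}; that is, it is a submodule of V_G(T(L)). -/
namespace GT

/-- The linear span of `N_G(T(R)) = {T(S) ∈ B_G(T(L)) : E⁺_{G(R)} ⊆ E⁺_{G(S)}}`. -/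
noncomputable def NGspan (n : ℕ) (E : (ℕ × ℕ) → (ℕ × ℕ) → Prop) (L R : Tableau) :
    Submodule ℂ (↥(BG n E L) →₀ ℂ) :=
  Submodule.span ℂ ((fun T : ↥(BG n E L) => Finsupp.single T (1 : ℂ)) ''
    {T : ↥(BG n E L) | Eplus (graphOf n R) ⊆ Eplus (graphOf n (T : Tableau))})

lemma raiseCoeff_factor_ne (T : Tableau) (k i : ℕ) (hc : raiseCoeff T k i ≠ 0)
    {j : ℕ} (hj : j ∈ Finset.Icc 1 (k+1)) : T (k, i) - T (k+1, j) ≠ 0 := by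
  intro h0
  apply hc
  unfold raiseCoeff
  rw [Finset.prod_eq_zero hj h0, zero_div, neg_zero]

lemma lowerCoeff_factor_ne (T : Tableau) (k i : ℕ) (hc : lowerCoeff T k i ≠ 0)
    {j : ℕ} (hj : j ∈ Finset.Icc 1 (k-1)) : T (k, i) - T (k-1, j) ≠ 0 := by
  intro h0
  apply hc
  unfold lowerCoeff
  rw [Finset.prod_eq_zero hj h0, zero_div]

lemma eplus_nonneg {n : ℕ} {M : Tableau} {p : (ℕ×ℕ) × (ℕ×ℕ)}
    (hp : p ∈ Eplus (graphOf n M)) :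
    p.1 ∈ Vtx n ∧ p.2 ∈ Vtx n ∧ p.1.1 = p.2.1 + 1 ∧ IsNonnegInt (M p.1 - M p.2) := by
  obtain ⟨⟨ha, hb, hor⟩, hrow⟩ := hp
  refine ⟨ha, hb, hrow, ?_⟩
  rcases hor with ⟨_, h⟩ | ⟨h, _⟩ | ⟨h1, h2, _⟩
  · exact h
  · exfalso; omega
  · exfalso; omega

lemma raise_preserve (n : ℕ) (R T : Tableau) (k i : ℕ)
    (hc : raiseCoeff T k i ≠ 0)
    (hsub : Eplus (graphOf n R) ⊆ Eplus (graphOf n T)) :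
    Eplus (graphOf n R) ⊆ Eplus (graphOf n (shift T k i 1)) := by
  rintro ⟨⟨a1, a2⟩, ⟨b1, b2⟩⟩ hp
  obtain ⟨ha, hb, hrow, m, hm⟩ := eplus_nonneg (hsub hp)
  simp only at hrow hm
  refine ⟨⟨ha, hb, Or.inl ⟨hrow, ?_⟩⟩, hrow⟩
  by_cases h2 : ((b1, b2) : ℕ × ℕ) = (k, i)
  · have h1 : ((a1, a2) : ℕ × ℕ) ≠ (k, i) := by
      intro h1
      rw [Prod.mk.injEq] at h1 h2
      omega
    have hm0 : m ≠ 0 := by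
      intro h0
      have ha1 : a1 = k + 1 := by
        rw [Prod.mk.injEq] at h2; omega
      have hj : a2 ∈ Finset.Icc 1 (k+1) := by
        obtain ⟨u1, u2, u3⟩ := ha
        simp only at u1 u2 u3
        rw [Finset.mem_Icc]; omega
      apply raiseCoeff_factor_ne T k i hc hj
      rw [← ha1, ← h2]
      rw [h0] at hm
      push_cast at hm
      linear_combination -hm
    obtain ⟨m', rfl⟩ := Nat.exists_eq_succ_of_ne_zero hm0
    refine ⟨m', ?_⟩
    simp only [shift, if_neg h1, if_pos h2]
    push_cast at hm ⊢
    linear_combination hm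
  · by_cases h1 : ((a1, a2) : ℕ × ℕ) = (k, i)
    · refine ⟨m + 1, ?_⟩
      simp only [shift, if_pos h1, if_neg h2]
      push_cast
      linear_combination hm
    · refine ⟨m, ?_⟩
      simp only [shift, if_neg h1, if_neg h2]
      linear_combination hm

lemma lower_preserve (n : ℕ) (R T : Tableau) (k i : ℕ)
    (hc : lowerCoeff T k i ≠ 0)
    (hsub : Eplus (graphOf n R) ⊆ Eplus (graphOf n T)) :
    Eplus (graphOf n R) ⊆ Eplus (graphOf n (shift T k i (-1))) := by
  rintro ⟨⟨a1, a2⟩, ⟨b1, b2⟩⟩ hp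
  obtain ⟨ha, hb, hrow, m, hm⟩ := eplus_nonneg (hsub hp)
  simp only at hrow hm
  refine ⟨⟨ha, hb, Or.inl ⟨hrow, ?_⟩⟩, hrow⟩
  by_cases h1 : ((a1, a2) : ℕ × ℕ) = (k, i)
  · have h2 : ((b1, b2) : ℕ × ℕ) ≠ (k, i) := by
      intro h2
      rw [Prod.mk.injEq] at h1 h2
      omega
    have hm0 : m ≠ 0 := by
      intro h0
      have hb1 : b1 = k - 1 := by
        rw [Prod.mk.injEq] at h1; omega
      have hj : b2 ∈ Finset.Icc 1 (k-1) := by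
        obtain ⟨u1, u2, u3⟩ := hb
        simp only at u1 u2 u3
        rw [Finset.mem_Icc]; omega
      apply lowerCoeff_factor_ne T k i hc hj
      rw [← hb1, ← h1]
      rw [h0] at hm
      push_cast at hm
      linear_combination hm
    obtain ⟨m', rfl⟩ := Nat.exists_eq_succ_of_ne_zero hm0
    refine ⟨m', ?_⟩
    simp only [shift, if_pos h1, if_neg h2]
    push_cast at hm ⊢
    linear_combination hm
  · by_cases h2 : ((b1, b2) : ℕ × ℕ) = (k, i)
    · refine ⟨m + 1, ?_⟩
      simp only [shift, if_neg h1, if_pos h2]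
      push_cast
      linear_combination hm
    · refine ⟨m, ?_⟩
      simp only [shift, if_neg h1, if_neg h2]
      linear_combination hm

lemma raiseOp_single (B : Set Tableau) (k : ℕ) (T : ↥B) :
    raiseOp B k (Finsupp.single T 1) =
      ∑ i ∈ Finset.Icc 1 k, raiseCoeff (T : Tableau) k i • emb B (shift (T : Tableau) k i 1) := by
  simp [raiseOp]

lemma lowerOp_single (B : Set Tableau) (k : ℕ) (T : ↥B) :
    lowerOp B k (Finsupp.single T 1) =
      ∑ i ∈ Finset.Icc 1 k, lowerCoeff (T : Tableau) k i • emb B (shift (T : Tableau) k i (-1)) := by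
  simp [lowerOp]

lemma diagOp_single (B : Set Tableau) (k : ℕ) (T : ↥B) :
    diagOp B k (Finsupp.single T 1) = diagCoeff (T : Tableau) k • Finsupp.single T 1 := by
  simp [diagOp]

/-- The span of `N_G(T(R))` is invariant under all the Gelfand–Tsetlin operators, i.e. it is
a submodule of `V_G(T(L))`. -/
theorem NGspan_is_submodule
    (n : ℕ) (hn : 2 ≤ n) (E : (ℕ × ℕ) → (ℕ × ℕ) → Prop) (hE : IsRelationGraph n E)
    (L : Tableau) (hL : IsRealization n E L)
    (R : Tableau) (hR : R ∈ BG n E L) :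
    IsSubmoduleGT n (BG n E L) (NGspan n E L R) := by
  classical
  set B := BG n E L with hB
  have key : ∀ (f : (↥B →₀ ℂ) →ₗ[ℂ] (↥B →₀ ℂ)),
      (∀ T : ↥B, Eplus (graphOf n R) ⊆ Eplus (graphOf n (T : Tableau)) →
        f (Finsupp.single T 1) ∈ NGspan n E L R) →
      ∀ v ∈ NGspan n E L R, f v ∈ NGspan n E L R := by
    intro f hf v hv
    have hle : NGspan n E L R ≤ Submodule.comap f (NGspan n E L R) := by
      conv_lhs => rw [NGspan]
      rw [Submodule.span_le]
      rintro x ⟨T, hT, rfl⟩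
      exact hf T hT
    exact hle hv
  constructor
  · intro k hk1 hk2 v hv
    constructor
    · refine key (raiseOp B k) ?_ v hv
      intro T hT
      rw [raiseOp_single]
      apply Submodule.sum_mem
      intro i _
      by_cases hc : raiseCoeff (T : Tableau) k i = 0
      · rw [hc, zero_smul]; exact Submodule.zero_mem _
      · apply Submodule.smul_mem
        unfold emb
        split_ifs with hmem
        · apply Submodule.subset_span
          exact ⟨⟨shift (T : Tableau) k i 1, hmem⟩,
            raise_preserve n R (T : Tableau) k i hc hT, rfl⟩
        · exact Submodule.zero_mem _
    · refine key (lowerOp B k) ?_ v hv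
      intro T hT
      rw [lowerOp_single]
      apply Submodule.sum_mem
      intro i _
      by_cases hc : lowerCoeff (T : Tableau) k i = 0
      · rw [hc, zero_smul]; exact Submodule.zero_mem _
      · apply Submodule.smul_mem
        unfold emb
        split_ifs with hmem
        · apply Submodule.subset_span
          exact ⟨⟨shift (T : Tableau) k i (-1), hmem⟩,
            lower_preserve n R (T : Tableau) k i hc hT, rfl⟩
        · exact Submodule.zero_mem _
  · intro k hk1 hk2 v hv
    refine key (diagOp B k) ?_ v hv
    intro T hT
    rw [diagOp_single]
    apply Submodule.smul_mem
    exact Submodule.subset_span ⟨T, hT, rfl⟩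
end GT
end
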